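/- arXiv:2206.07950 — 7 statements merged into one kernel-verified Lean document; each statement's English description precedes it below -/
import Mathlib

section
/- For every x ∈ ℝ: −√(2u₂) ≤ ψ'(x)/ψ(x) ≤ −√(2u₁). (This is Lemma 2.3(2) in the case λ > ρ: writing K₂ = √(2(γ(λ)−(m−1)es)) and K₁ = √(2(γ(λ)−(m−1)ei)), one has −K₁ ≤ ψ_x/ψ ≤ −K₂ on ℝ.) -/
/-- Lemma 2.3(2), case `λ > ρ`: if `ψ > 0` is twice differentiable, solves
`ψ'' = 2 a ψ` with `0 < u₁ ≤ a ≤ u₂`, and `ψ(x) → 0` as `x → +∞`, then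
`−√(2u₂) ≤ ψ'(x)/ψ(x) ≤ −√(2u₁)` for all `x`. -/
theorem stmt3 (u₁ u₂ : ℝ) (hu₁ : 0 < u₁) (hu : u₁ ≤ u₂)
    (a : ℝ → ℝ) (ha_cont : Continuous a) (ha : ∀ x, u₁ ≤ a x ∧ a x ≤ u₂)
    (ψ : ℝ → ℝ) (hψ : Differentiable ℝ ψ) (hψ' : Differentiable ℝ (deriv ψ))
    (hpos : ∀ x, 0 < ψ x)
    (hode : ∀ x, deriv (deriv ψ) x = 2 * a x * ψ x)
    (hlim : Filter.Tendsto ψ Filter.atTop (nhds 0)) :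
    ∀ x : ℝ, -Real.sqrt (2 * u₂) ≤ deriv ψ x / ψ x ∧
      deriv ψ x / ψ x ≤ -Real.sqrt (2 * u₁) := by
  have hdd : ∀ x, 0 < deriv (deriv ψ) x := by
    intro x
    rw [hode x]
    have h1 := (ha x).1
    have h2 := hpos x
    nlinarith
  have hmono' : StrictMono (deriv ψ) := strictMono_of_deriv_pos hdd
  -- ψ' < 0 everywhere
  have hneg : ∀ x, deriv ψ x < 0 := by
    intro x₀
    by_contra h
    push_neg at h
    have hmonoψ : MonotoneOn ψ (Set.Ici x₀) := by
      apply monotoneOn_of_deriv_nonneg (convex_Ici x₀) hψ.continuous.continuousOn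
        (fun y _ => (hψ y).differentiableWithinAt)
      intro y hy
      rw [interior_Ici] at hy
      exact le_trans h (hmono'.le_iff_le.mpr (le_of_lt hy))
    have hev : ∀ᶠ x in Filter.atTop, ψ x < ψ x₀ :=
      hlim.eventually_lt_const (hpos x₀)
    obtain ⟨x, hx⟩ := (hev.and (Filter.eventually_ge_atTop x₀)).exists
    exact absurd (hmonoψ Set.self_mem_Ici hx.2 hx.2) (not_le.mpr hx.1)
  -- ψ' → 0 at +∞
  have hlim' : Filter.Tendsto (deriv ψ) Filter.atTop (nhds 0) := by
    have hbdd : BddAbove (Set.range (deriv ψ)) :=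
      ⟨0, by rintro _ ⟨x, rfl⟩; exact (hneg x).le⟩
    have ht := tendsto_atTop_ciSup hmono'.monotone hbdd
    set L := ⨆ x, deriv ψ x with hLdef
    have hL0 : L ≤ 0 := ciSup_le fun x => (hneg x).le
    rcases hL0.lt_or_eq with hL | hL
    · exfalso
      have hle : ∀ x, deriv ψ x ≤ L := fun x => le_ciSup hbdd x
      have hD : ∀ x : ℝ, HasDerivAt (fun x => ψ x - L * x) (deriv ψ x - L) x := by
        intro x
        exact ((hψ x).hasDerivAt.sub ((hasDerivAt_id x).const_mul L)).congr_deriv (by ring)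
      have hganti : Antitone (fun x => ψ x - L * x) := by
        apply antitone_of_deriv_nonpos (fun x => (hD x).differentiableAt)
        intro x
        rw [(hD x).deriv]
        linarith [hle x]
      set x := (ψ 0 + 1) / (-L) with hxdef
      have hx0 : 0 ≤ x := by
        apply div_nonneg
        · linarith [hpos 0]
        · linarith
      have hg := hganti hx0
      simp only [mul_zero, sub_zero] at hg
      have hLx : L * x = -(ψ 0 + 1) := by
        rw [hxdef]
        field_simp [hL.ne]
      have := hpos x
      nlinarith
    · rwa [hL] at ht
  -- derivative of the energy functions
  have hE : ∀ (c : ℝ) (x : ℝ),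
      HasDerivAt (fun y => deriv ψ y * deriv ψ y - 2 * c * (ψ y * ψ y))
        (4 * ψ x * deriv ψ x * (a x - c)) x := by
    intro c x
    have h1 : HasDerivAt (fun y => deriv ψ y * deriv ψ y)
        (deriv (deriv ψ) x * deriv ψ x + deriv ψ x * deriv (deriv ψ) x) x :=
      (hψ' x).hasDerivAt.mul (hψ' x).hasDerivAt
    have h2 : HasDerivAt (fun y => ψ y * ψ y)
        (deriv ψ x * ψ x + ψ x * deriv ψ x) x :=
      (hψ x).hasDerivAt.mul (hψ x).hasDerivAt
    have := h1.sub (h2.const_mul (2 * c))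
    refine this.congr_deriv ?_
    rw [hode x]
    ring
  have hEdiff : ∀ c : ℝ, Differentiable ℝ
      (fun y => deriv ψ y * deriv ψ y - 2 * c * (ψ y * ψ y)) :=
    fun c => fun x => ((hE c x).differentiableAt)
  have hEtend : ∀ c : ℝ, Filter.Tendsto
      (fun y => deriv ψ y * deriv ψ y - 2 * c * (ψ y * ψ y))
      Filter.atTop (nhds 0) := by
    intro c
    have := (hlim'.mul hlim').sub ((hlim.mul hlim).const_mul (2 * c))
    simpa using this
  -- G = ψ'² - 2u₁ψ² is antitone, hence ≥ 0
  have hG : ∀ x, 0 ≤ deriv ψ x * deriv ψ x - 2 * u₁ * (ψ x * ψ x) := by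
    have hanti : Antitone (fun y => deriv ψ y * deriv ψ y - 2 * u₁ * (ψ y * ψ y)) := by
      apply antitone_of_deriv_nonpos (hEdiff u₁)
      intro x
      rw [(hE u₁ x).deriv]
      have h1 := (ha x).1
      have h2 := hpos x
      have h3 := hneg x
      have h4 : 0 ≤ 4 * ψ x * -deriv ψ x * (a x - u₁) :=
        mul_nonneg (mul_nonneg (by linarith) (by linarith)) (by linarith)
      nlinarith [h4]
    exact fun x => hanti.le_of_tendsto (hEtend u₁) x
  -- F = ψ'² - 2u₂ψ² is monotone, hence ≤ 0
  have hF : ∀ x, deriv ψ x * deriv ψ x - 2 * u₂ * (ψ x * ψ x) ≤ 0 := by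
    have hmonoF : Monotone (fun y => deriv ψ y * deriv ψ y - 2 * u₂ * (ψ y * ψ y)) := by
      apply monotone_of_deriv_nonneg (hEdiff u₂)
      intro x
      rw [(hE u₂ x).deriv]
      have h1 := (ha x).2
      have h2 := hpos x
      have h3 := hneg x
      have h4 : 0 ≤ 4 * ψ x * -deriv ψ x * (u₂ - a x) :=
        mul_nonneg (mul_nonneg (by linarith) (by linarith)) (by linarith)
      nlinarith [h4]
    exact fun x => hmonoF.ge_of_tendsto (hEtend u₂) x
  -- conclude
  intro x
  have hp := hpos x
  have hq := hneg x
  have hGx := hG x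
  have hFx := hF x
  have hs₁ : Real.sqrt (2 * u₁) ^ 2 = 2 * u₁ := Real.sq_sqrt (by linarith)
  have hs₂ : Real.sqrt (2 * u₂) ^ 2 = 2 * u₂ := Real.sq_sqrt (by linarith)
  have hs₁0 : 0 ≤ Real.sqrt (2 * u₁) := Real.sqrt_nonneg _
  have hs₂0 : 0 ≤ Real.sqrt (2 * u₂) := Real.sqrt_nonneg _
  have key₂ : -deriv ψ x ≤ Real.sqrt (2 * u₂) * ψ x := by
    have h1 : (-deriv ψ x) ^ 2 ≤ (Real.sqrt (2 * u₂) * ψ x) ^ 2 := by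
      nlinarith [hs₂, hFx, sq_nonneg (ψ x)]
    calc -deriv ψ x = Real.sqrt ((-deriv ψ x) ^ 2) := (Real.sqrt_sq (by linarith)).symm
      _ ≤ Real.sqrt ((Real.sqrt (2 * u₂) * ψ x) ^ 2) := Real.sqrt_le_sqrt h1
      _ = Real.sqrt (2 * u₂) * ψ x := Real.sqrt_sq (mul_nonneg hs₂0 hp.le)
  have key₁ : Real.sqrt (2 * u₁) * ψ x ≤ -deriv ψ x := by
    have h1 : (Real.sqrt (2 * u₁) * ψ x) ^ 2 ≤ (-deriv ψ x) ^ 2 := by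
      nlinarith [hs₁, hGx, sq_nonneg (ψ x)]
    calc Real.sqrt (2 * u₁) * ψ x
        = Real.sqrt ((Real.sqrt (2 * u₁) * ψ x) ^ 2) :=
          (Real.sqrt_sq (mul_nonneg hs₁0 hp.le)).symm
      _ ≤ Real.sqrt ((-deriv ψ x) ^ 2) := Real.sqrt_le_sqrt h1
      _ = -deriv ψ x := Real.sqrt_sq (by linarith)
  constructor
  · rw [le_div_iff₀ hp]
    linarith
  · rw [div_le_iff₀ hp]
    linarith
end

section
/- For every x ∈ ℝ: √(2u₁) ≤ ψ'(x)/ψ(x) ≤ √(2u₂). In particular ψ is strictly increasing on ℝ. (This is Lemma 2.3(2) in the case λ < −ρ.) -/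
open Filter Real Set

/-- Lemma 2.3(2), case `λ < −ρ`: if `ψ > 0` is twice differentiable, solves
`ψ'' = 2 a ψ` with `0 < u₁ ≤ a ≤ u₂`, and `ψ(x) → 0` as `x → −∞`, then
`√(2u₁) ≤ ψ'(x)/ψ(x) ≤ √(2u₂)` for all `x`; in particular `ψ` is strictly
increasing on `ℝ`. -/
theorem stmt4 (u₁ u₂ : ℝ) (hu₁ : 0 < u₁) (hu : u₁ ≤ u₂)
    (a : ℝ → ℝ) (ha_cont : Continuous a) (ha : ∀ x, u₁ ≤ a x ∧ a x ≤ u₂)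
    (ψ : ℝ → ℝ) (hψ : Differentiable ℝ ψ) (hψ' : Differentiable ℝ (deriv ψ))
    (hpos : ∀ x, 0 < ψ x)
    (hode : ∀ x, deriv (deriv ψ) x = 2 * a x * ψ x)
    (hlim : Filter.Tendsto ψ Filter.atBot (nhds 0)) :
    (∀ x : ℝ, Real.sqrt (2 * u₁) ≤ deriv ψ x / ψ x ∧
      deriv ψ x / ψ x ≤ Real.sqrt (2 * u₂)) ∧ StrictMono ψ := by
  have hψc : Continuous ψ := hψ.continuous
  -- ψ'' > 0 everywhere
  have hd2pos : ∀ x, 0 < deriv (deriv ψ) x := by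
    intro x
    rw [hode x]
    have h1 := (ha x).1
    have h2 := hpos x
    nlinarith
  -- ψ' strictly increasing
  have hmono' : StrictMono (deriv ψ) := strictMono_of_deriv_pos hd2pos
  -- ψ' ≥ 0 everywhere
  have hd1nonneg : ∀ x, 0 ≤ deriv ψ x := by
    intro x₀
    by_contra h
    push_neg at h
    have key : ∀ x ≤ x₀, ψ x₀ ≤ ψ x := by
      intro x hx
      rcases eq_or_lt_of_le hx with rfl | hlt
      · exact le_refl _
      · obtain ⟨c, hc, hceq⟩ := exists_hasDerivAt_eq_slope ψ (deriv ψ) hlt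
          hψc.continuousOn (fun y _ => (hψ y).hasDerivAt)
        have h1 : deriv ψ c < 0 := lt_trans (hmono' hc.2) h
        rw [hceq] at h1
        have hx0 : 0 < x₀ - x := by linarith
        have := (div_neg_iff).mp h1
        rcases this with ⟨_, h2⟩ | ⟨h2, _⟩
        · linarith
        · linarith
    have : ψ x₀ ≤ 0 := ge_of_tendsto hlim (eventually_atBot.2 ⟨x₀, key⟩)
    linarith [hpos x₀]
  -- ψ' > 0 everywhere
  have hd1pos : ∀ x, 0 < deriv ψ x := by
    intro x
    rcases (hd1nonneg x).lt_or_eq with h | h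
    · exact h
    · exfalso
      have h1 : deriv ψ (x - 1) < deriv ψ x := hmono' (by linarith)
      have h2 := hd1nonneg (x - 1)
      linarith [h.symm]
  -- ψ' → 0 at -∞
  have hBdd : BddBelow (Set.range (deriv ψ)) := ⟨0, by rintro y ⟨x, rfl⟩; exact hd1nonneg x⟩
  have htendInf : Tendsto (deriv ψ) atBot (nhds (⨅ x, deriv ψ x)) :=
    tendsto_atBot_ciInf hmono'.monotone hBdd
  have hL0 : (⨅ x, deriv ψ x) = 0 := by
    have hLnn : 0 ≤ ⨅ x, deriv ψ x := le_ciInf hd1nonneg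
    rcases hLnn.lt_or_eq with hL | hL
    · exfalso
      have hLle : ∀ x, (⨅ x, deriv ψ x) ≤ deriv ψ x := fun x => ciInf_le hBdd x
      set L := ⨅ x, deriv ψ x with hLdef
      have hx0 : -(ψ 0) / L - 1 < 0 := by
        have : -(ψ 0) / L < 0 := div_neg_of_neg_of_pos (by linarith [hpos 0]) hL
        linarith
      obtain ⟨c, hc, hceq⟩ := exists_hasDerivAt_eq_slope ψ (deriv ψ) hx0
        hψc.continuousOn (fun y _ => (hψ y).hasDerivAt)
      have h1 : L ≤ (ψ 0 - ψ (-(ψ 0) / L - 1)) / (0 - (-(ψ 0) / L - 1)) := hceq ▸ hLle c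
      have h2 : (0:ℝ) < 0 - (-(ψ 0) / L - 1) := by linarith
      have h3 : L * (0 - (-(ψ 0) / L - 1)) ≤ ψ 0 - ψ (-(ψ 0) / L - 1) :=
        (le_div_iff₀ h2).mp h1
      have h4 : L * (0 - (-(ψ 0) / L - 1)) = ψ 0 + L := by
        field_simp
        ring
      have := hpos (-(ψ 0) / L - 1)
      nlinarith
    · exact hL.symm
  have htend0 : Tendsto (deriv ψ) atBot (nhds 0) := hL0 ▸ htendInf
  -- The energy functions
  have hder : ∀ (u : ℝ) (x : ℝ), HasDerivAt (fun y => deriv ψ y * deriv ψ y - 2 * u * (ψ y * ψ y))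
      (4 * ψ x * deriv ψ x * (a x - u)) x := by
    intro u x
    have h1 := ((hψ' x).hasDerivAt.mul (hψ' x).hasDerivAt)
    have h2 := (((hψ x).hasDerivAt.mul (hψ x).hasDerivAt).const_mul (2 * u))
    have h3 := h1.sub h2
    exact h3.congr_deriv (by rw [hode x]; ring)
  have htendF : ∀ u : ℝ, Tendsto (fun y => deriv ψ y * deriv ψ y - 2 * u * (ψ y * ψ y))
      atBot (nhds 0) := by
    intro u
    have := ((htend0.mul htend0).sub ((hlim.mul hlim).const_mul (2 * u)))
    simpa using this
  -- lower energy: ψ'² - 2u₁ψ² ≥ 0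
  have hF0 : ∀ x, 0 ≤ deriv ψ x * deriv ψ x - 2 * u₁ * (ψ x * ψ x) := by
    intro x
    have hFmono : Monotone (fun y => deriv ψ y * deriv ψ y - 2 * u₁ * (ψ y * ψ y)) := by
      apply monotone_of_deriv_nonneg (fun y => (hder u₁ y).differentiableAt)
      intro y
      rw [(hder u₁ y).deriv]
      have h4 : 0 ≤ a y - u₁ := by linarith [(ha y).1]
      exact mul_nonneg (mul_nonneg (mul_nonneg (by norm_num) (hpos y).le) (hd1nonneg y)) h4
    exact le_of_tendsto (htendF u₁) (eventually_atBot.2 ⟨x, fun y hy => hFmono hy⟩)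
  -- upper energy: ψ'² - 2u₂ψ² ≤ 0
  have hG0 : ∀ x, deriv ψ x * deriv ψ x - 2 * u₂ * (ψ x * ψ x) ≤ 0 := by
    intro x
    have hGanti : Antitone (fun y => deriv ψ y * deriv ψ y - 2 * u₂ * (ψ y * ψ y)) := by
      apply antitone_of_deriv_nonpos (fun y => (hder u₂ y).differentiableAt)
      intro y
      rw [(hder u₂ y).deriv]
      have h4 : 0 ≤ u₂ - a y := by linarith [(ha y).2]
      have h5 := mul_nonneg (mul_nonneg (mul_nonneg (by norm_num : (0:ℝ) ≤ 4) (hpos y).le)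
        (hd1nonneg y)) h4
      nlinarith [h5]
    exact ge_of_tendsto (htendF u₂) (eventually_atBot.2 ⟨x, fun y hy => hGanti hy⟩)
  refine ⟨fun x => ⟨?_, ?_⟩, strictMono_of_deriv_pos hd1pos⟩
  · rw [le_div_iff₀ (hpos x)]
    calc Real.sqrt (2 * u₁) * ψ x = Real.sqrt (2 * u₁ * (ψ x) ^ 2) := by
          rw [Real.sqrt_mul (by positivity : (0:ℝ) ≤ 2 * u₁) ((ψ x) ^ 2),
            Real.sqrt_sq (hpos x).le]
      _ ≤ Real.sqrt ((deriv ψ x) ^ 2) := by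
          apply Real.sqrt_le_sqrt
          nlinarith [hF0 x]
      _ = deriv ψ x := Real.sqrt_sq (hd1nonneg x)
  · rw [div_le_iff₀ (hpos x)]
    calc deriv ψ x = Real.sqrt ((deriv ψ x) ^ 2) := (Real.sqrt_sq (hd1nonneg x)).symm
      _ ≤ Real.sqrt (2 * u₂ * (ψ x) ^ 2) := by
          apply Real.sqrt_le_sqrt
          nlinarith [hG0 x]
      _ = Real.sqrt (2 * u₂) * ψ x := by
          rw [Real.sqrt_mul (by linarith : (0:ℝ) ≤ 2 * u₂) ((ψ x) ^ 2),
            Real.sqrt_sq (hpos x).le]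
end

section
/- (i) For all reals y < z: K₂·(z − y) ≤ ln ψ(z) − ln ψ(y) ≤ K₁·(z − y). (ii) For every t ∈ ℝ there exists a unique V_t ∈ ℝ with ln ψ(V_t) = γ̄·t, and for all s < t: γ̄·(t − s)/K₁ ≤ V_t − V_s ≤ γ̄·(t − s)/K₂. (These are displays (2.18) and (2.19) of Remark 2.4.) -/
open Filter Real Set

/-- Remark 2.4, displays (2.18) and (2.19): with `K₂ = √(2u₁)`, `K₁ = √(2u₂)` and
`γ̄ > 0`: (i) `K₂ (z−y) ≤ ln ψ(z) − ln ψ(y) ≤ K₁ (z−y)` for `y < z`; (ii) for each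
`t` there is a unique `V_t` with `ln ψ(V_t) = γ̄ t`, and for `s < t`,
`γ̄ (t−s)/K₁ ≤ V_t − V_s ≤ γ̄ (t−s)/K₂`. -/
theorem stmt5 (u₁ u₂ : ℝ) (hu₁ : 0 < u₁) (hu : u₁ ≤ u₂)
    (a : ℝ → ℝ) (ha_cont : Continuous a) (ha : ∀ x, u₁ ≤ a x ∧ a x ≤ u₂)
    (ψ : ℝ → ℝ) (hψ : Differentiable ℝ ψ) (hψ' : Differentiable ℝ (deriv ψ))
    (hpos : ∀ x, 0 < ψ x)
    (hode : ∀ x, deriv (deriv ψ) x = 2 * a x * ψ x)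
    (hlim : Filter.Tendsto ψ Filter.atBot (nhds 0))
    (γb : ℝ) (hγb : 0 < γb) :
    (∀ y z : ℝ, y < z →
      Real.sqrt (2 * u₁) * (z - y) ≤ Real.log (ψ z) - Real.log (ψ y) ∧
      Real.log (ψ z) - Real.log (ψ y) ≤ Real.sqrt (2 * u₂) * (z - y)) ∧
    (∀ t : ℝ, ∃! V : ℝ, Real.log (ψ V) = γb * t) ∧
    (∀ s t Vs Vt : ℝ, s < t → Real.log (ψ Vs) = γb * s → Real.log (ψ Vt) = γb * t →
      γb * (t - s) / Real.sqrt (2 * u₂) ≤ Vt - Vs ∧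
      Vt - Vs ≤ γb * (t - s) / Real.sqrt (2 * u₁)) := by
  have hu₂ : 0 < u₂ := lt_of_lt_of_le hu₁ hu
  have K₂pos : 0 < Real.sqrt (2 * u₁) := Real.sqrt_pos.2 (by linarith)
  have K₁pos : 0 < Real.sqrt (2 * u₂) := Real.sqrt_pos.2 (by linarith)
  have hK₂sq : Real.sqrt (2 * u₁) ^ 2 = 2 * u₁ := Real.sq_sqrt (by linarith)
  have hK₁sq : Real.sqrt (2 * u₂) ^ 2 = 2 * u₂ := Real.sq_sqrt (by linarith)
  -- ψ'' > 0
  have h2 : ∀ x, 0 < deriv (deriv ψ) x := by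
    intro x
    rw [hode]
    have h1 := (ha x).1
    have := hpos x
    nlinarith
  have hmono' : StrictMono (deriv ψ) := strictMono_of_deriv_pos h2
  -- ψ' > 0
  have hd_pos : ∀ x, 0 < deriv ψ x := by
    intro x₀
    have hev : ∀ᶠ x in atBot, ψ x < ψ x₀ ∧ x < x₀ :=
      (hlim.eventually_lt_const (hpos x₀)).and (eventually_lt_atBot x₀)
    obtain ⟨x, hx1, hx2⟩ := hev.exists
    obtain ⟨c, hc, hc'⟩ := exists_hasDerivAt_eq_slope ψ (deriv ψ) hx2
      hψ.continuous.continuousOn (fun y _ => (hψ y).hasDerivAt)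
    have hcpos : 0 < deriv ψ c := by
      rw [hc']
      apply div_pos <;> linarith
    exact hcpos.trans (hmono' hc.2)
  -- ψ' → 0 at -∞
  have hbdd : BddBelow (Set.range (deriv ψ)) :=
    ⟨0, by rintro y ⟨x, rfl⟩; exact (hd_pos x).le⟩
  have hdlim : Tendsto (deriv ψ) atBot (nhds (⨅ x, deriv ψ x)) :=
    tendsto_atBot_ciInf hmono'.monotone hbdd
  have hL0nonneg : 0 ≤ ⨅ x, deriv ψ x := le_ciInf fun x => (hd_pos x).le
  have hL0 : (⨅ x, deriv ψ x) = 0 := by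
    by_contra h
    set L0 := ⨅ x, deriv ψ x with hL0def
    have hL0pos : 0 < L0 := lt_of_le_of_ne hL0nonneg (Ne.symm h)
    set x := -(ψ 0 + 1) / L0 with hxdef
    have hxneg : x < 0 := by
      rw [hxdef]
      apply div_neg_of_neg_of_pos _ hL0pos
      have := hpos 0; linarith
    obtain ⟨c, hc, hc'⟩ := exists_hasDerivAt_eq_slope ψ (deriv ψ) hxneg
      hψ.continuous.continuousOn (fun y _ => (hψ y).hasDerivAt)
    have hle : L0 ≤ deriv ψ c := ciInf_le hbdd c
    rw [hc'] at hle
    have h1 : L0 * (0 - x) ≤ ψ 0 - ψ x := by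
      rw [← le_div_iff₀ (by linarith)] at *
      exact hle
    have hx0 : L0 * x = -(ψ 0 + 1) := by
      rw [hxdef]; field_simp
    have := hpos x
    nlinarith
  rw [hL0] at hdlim
  -- derivative of the energy functions
  have hg : ∀ (u : ℝ) (x : ℝ), HasDerivAt (fun y => (deriv ψ y) ^ 2 - 2 * u * (ψ y) ^ 2)
      (4 * (a x - u) * ψ x * deriv ψ x) x := by
    intro u x
    have h1 : HasDerivAt (fun y => (deriv ψ y) ^ 2)
        ((2 : ℕ) * (deriv ψ x) ^ 1 * deriv (deriv ψ) x) x := ((hψ' x).hasDerivAt).pow 2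
    have h2 : HasDerivAt (fun y => 2 * u * (ψ y) ^ 2)
        (2 * u * ((2 : ℕ) * (ψ x) ^ 1 * deriv ψ x)) x := (((hψ x).hasDerivAt).pow 2).const_mul _
    have := h1.sub h2
    refine this.congr_deriv ?_
    rw [hode]
    push_cast
    ring
  -- energy bounds
  have henergy : ∀ x, 2 * u₁ * (ψ x) ^ 2 ≤ (deriv ψ x) ^ 2 ∧
      (deriv ψ x) ^ 2 ≤ 2 * u₂ * (ψ x) ^ 2 := by
    intro x
    have hlim1 : Tendsto (fun y => (deriv ψ y) ^ 2 - 2 * u₁ * (ψ y) ^ 2) atBot (nhds 0) := by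
      have := ((hdlim.pow 2).sub (((hlim.pow 2)).const_mul (2 * u₁)))
      simpa using this
    have hlim2 : Tendsto (fun y => (deriv ψ y) ^ 2 - 2 * u₂ * (ψ y) ^ 2) atBot (nhds 0) := by
      have := ((hdlim.pow 2).sub (((hlim.pow 2)).const_mul (2 * u₂)))
      simpa using this
    have hmon1 : Monotone (fun y => (deriv ψ y) ^ 2 - 2 * u₁ * (ψ y) ^ 2) := by
      apply monotone_of_deriv_nonneg
      · exact fun y => ((hg u₁ y).differentiableAt)
      · intro y
        rw [(hg u₁ y).deriv]
        have h := mul_nonneg (mul_nonneg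
          (by linarith [(ha y).1] : (0:ℝ) ≤ 4 * (a y - u₁)) (hpos y).le) (hd_pos y).le
        linarith
    have hmon2 : Antitone (fun y => (deriv ψ y) ^ 2 - 2 * u₂ * (ψ y) ^ 2) := by
      apply antitone_of_deriv_nonpos
      · exact fun y => ((hg u₂ y).differentiableAt)
      · intro y
        rw [(hg u₂ y).deriv]
        have h := mul_nonneg (mul_nonneg
          (by linarith [(ha y).2] : (0:ℝ) ≤ 4 * (u₂ - a y)) (hpos y).le) (hd_pos y).le
        linarith
    constructor
    · have : (0 : ℝ) ≤ (deriv ψ x) ^ 2 - 2 * u₁ * (ψ x) ^ 2 :=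
        le_of_tendsto hlim1 ((eventually_le_atBot x).mono fun y hy => hmon1 hy)
      linarith
    · have : (deriv ψ x) ^ 2 - 2 * u₂ * (ψ x) ^ 2 ≤ 0 :=
        ge_of_tendsto hlim2 ((eventually_le_atBot x).mono fun y hy => hmon2 hy)
      linarith
  -- pointwise bounds on ψ'/ψ
  have hratio : ∀ x, Real.sqrt (2 * u₁) * ψ x ≤ deriv ψ x ∧
      deriv ψ x ≤ Real.sqrt (2 * u₂) * ψ x := by
    intro x
    obtain ⟨h1, h2⟩ := henergy x
    have hψx := hpos x
    have hdx := hd_pos x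
    constructor
    · nlinarith [sq_nonneg (deriv ψ x - Real.sqrt (2 * u₁) * ψ x),
        sq_nonneg (deriv ψ x + Real.sqrt (2 * u₁) * ψ x), mul_pos K₂pos hψx]
    · nlinarith [sq_nonneg (deriv ψ x - Real.sqrt (2 * u₂) * ψ x),
        mul_pos K₁pos hψx]
  -- derivative of log ∘ ψ
  have hlog : ∀ x, HasDerivAt (fun y => Real.log (ψ y)) (deriv ψ x / ψ x) x :=
    fun x => ((hψ x).hasDerivAt).log (hpos x).ne'
  -- part (i)
  have hi : ∀ y z : ℝ, y < z →
      Real.sqrt (2 * u₁) * (z - y) ≤ Real.log (ψ z) - Real.log (ψ y) ∧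
      Real.log (ψ z) - Real.log (ψ y) ≤ Real.sqrt (2 * u₂) * (z - y) := by
    intro y z hyz
    obtain ⟨c, _, hc'⟩ := exists_hasDerivAt_eq_slope (fun x => Real.log (ψ x))
      (fun x => deriv ψ x / ψ x) hyz
      ((hψ.continuous.log fun x => (hpos x).ne').continuousOn)
      (fun x _ => hlog x)
    have hψc := hpos c
    obtain ⟨hr1, hr2⟩ := hratio c
    have hb1 : Real.sqrt (2 * u₁) ≤ deriv ψ c / ψ c := by
      rw [le_div_iff₀ hψc]; linarith
    have hb2 : deriv ψ c / ψ c ≤ Real.sqrt (2 * u₂) := by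
      rw [div_le_iff₀ hψc]; linarith
    have heq : Real.log (ψ z) - Real.log (ψ y) = deriv ψ c / ψ c * (z - y) := by
      rw [hc', div_mul_cancel₀ _ (sub_ne_zero.2 hyz.ne')]
    rw [heq]
    constructor
    · exact mul_le_mul_of_nonneg_right hb1 (by linarith)
    · exact mul_le_mul_of_nonneg_right hb2 (by linarith)
  -- log ∘ ψ is strictly monotone
  have hsm : StrictMono (fun x => Real.log (ψ x)) := by
    intro y z hyz
    have := (hi y z hyz).1
    have : 0 < Real.sqrt (2 * u₁) * (z - y) := mul_pos K₂pos (by linarith)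
    simp only
    linarith [(hi y z hyz).1]
  -- surjectivity of log ∘ ψ
  have hcont : Continuous (fun x => Real.log (ψ x)) :=
    hψ.continuous.log fun x => (hpos x).ne'
  have htop : Tendsto (fun x => Real.log (ψ x)) atTop atTop := by
    apply tendsto_atTop_mono' _
      (show ∀ᶠ x in atTop, Real.log (ψ 0) + Real.sqrt (2 * u₁) * x ≤ Real.log (ψ x) from ?_)
    · exact tendsto_atTop_add_const_left _ _ (tendsto_id.const_mul_atTop K₂pos)
    · filter_upwards [eventually_gt_atTop 0] with x hx
      have := (hi 0 x hx).1
      nlinarith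
  have hbot : Tendsto (fun x => Real.log (ψ x)) atBot atBot := by
    apply tendsto_atBot_mono' _
      (show ∀ᶠ x in atBot, Real.log (ψ x) ≤ Real.log (ψ 0) + Real.sqrt (2 * u₁) * x from ?_)
    · exact tendsto_atBot_add_const_left _ _ (tendsto_id.const_mul_atBot K₂pos)
    · filter_upwards [eventually_lt_atBot 0] with x hx
      have := (hi x 0 hx).1
      nlinarith
  have hsurj : Function.Surjective (fun x => Real.log (ψ x)) :=
    hcont.surjective htop hbot
  refine ⟨hi, ?_, ?_⟩
  · intro t
    obtain ⟨V, hV⟩ := hsurj (γb * t)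
    exact ⟨V, hV, fun y hy => hsm.injective (hy.trans hV.symm)⟩
  · intro s t Vs Vt hst hs ht
    have hlt : Vs < Vt := by
      have : Real.log (ψ Vs) < Real.log (ψ Vt) := by
        rw [hs, ht]
        exact mul_lt_mul_of_pos_left hst hγb
      exact hsm.lt_iff_lt.mp this
    obtain ⟨h1, h2⟩ := hi Vs Vt hlt
    have key : Real.log (ψ Vt) - Real.log (ψ Vs) = γb * (t - s) := by
      rw [hs, ht]; ring
    rw [key] at h1 h2
    constructor
    · rw [div_le_iff₀ K₁pos]
      nlinarith
    · rw [le_div_iff₀ K₂pos]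
      nlinarith
end

section
/- There exist constants c₄ ∈ (0, 1/(2eK)] and c₅ > 0, depending only on v and K, such that for every real η with |η| ≤ c₄ the random variable e^{ηX} is integrable and E[e^{ηX}] ≥ e^{c₅η²}. (This is display (3.33) in the proof of Lemma 3.10, with v playing the role of the variance lower bound c₃.) -/
lemma aux_exp_tsum (x : ℝ) : Real.exp x = ∑' n : ℕ, x ^ n / n.factorial := by
  rw [Real.exp_eq_exp_ℝ, NormedSpace.exp_eq_tsum_div]

lemma aux_tail (x : ℝ) :
    Real.exp x - (1 + x + x ^ 2 / 2) = ∑' n : ℕ, x ^ (n + 3) / (n + 3).factorial := by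
  have h := Summable.sum_add_tsum_nat_add (f := fun n : ℕ => x ^ n / n.factorial) 3
    (Real.summable_pow_div_factorial x)
  rw [aux_exp_tsum x, ← h]
  have : ∑ i ∈ Finset.range 3, x ^ i / (i.factorial : ℝ) = 1 + x + x ^ 2 / 2 := by
    norm_num [Finset.sum_range_succ, Nat.factorial]
  rw [this]; ring

lemma aux_summable_tail (x : ℝ) :
    Summable (fun n : ℕ => x ^ (n + 3) / ((n + 3).factorial : ℝ)) :=
  (summable_nat_add_iff 3).mpr (Real.summable_pow_div_factorial x)

lemma aux_tail_nonneg (x : ℝ) (hx : 0 ≤ x) :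
    0 ≤ Real.exp x - (1 + x + x ^ 2 / 2) := by
  rw [aux_tail]
  exact tsum_nonneg fun n => by positivity

lemma aux_pointwise (t : ℝ) :
    1 + t + t ^ 2 / 2 - (Real.exp |t| - (1 + |t| + |t| ^ 2 / 2)) ≤ Real.exp t := by
  have h1 := aux_tail t
  have h2 := aux_tail |t|
  have key : -(∑' n : ℕ, |t| ^ (n + 3) / ((n + 3).factorial : ℝ))
      ≤ ∑' n : ℕ, t ^ (n + 3) / ((n + 3).factorial : ℝ) := by
    rw [← tsum_neg]
    refine Summable.tsum_le_tsum (fun n => ?_) ((aux_summable_tail |t|).neg) (aux_summable_tail t)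
    have h3 : -(|t| ^ (n + 3)) ≤ t ^ (n + 3) := by
      rw [← abs_pow]; exact neg_abs_le _
    have hf : (0:ℝ) < (n + 3).factorial := by positivity
    rw [← neg_div]
    gcongr
  linarith

lemma aux_pow_fact (n : ℕ) : (n : ℝ) ^ n ≤ Real.exp 1 ^ n * n.factorial := by
  have h := Real.pow_div_factorial_le_exp (x := (n : ℝ)) (by positivity) n
  have hf : (0:ℝ) < n.factorial := by positivity
  have he : Real.exp (n : ℝ) = Real.exp 1 ^ n := by rw [← Real.exp_nat_mul, mul_one]
  rw [div_le_iff₀ hf, he] at h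
  exact h

open MeasureTheory in
/-- Display (3.33): there are constants `c₄ ∈ (0, 1/(2eK)]` and `c₅ > 0`, depending only
on `v` and `K`, such that any centered random variable `X` with `E[X²] ≥ v` and
`E[|X|^ℓ] ≤ (Kℓ)^ℓ` for all `ℓ ≥ 1` satisfies `E[e^{ηX}] ≥ e^{c₅η²}` for `|η| ≤ c₄`. -/
theorem stmt7 (v K : ℝ) (hv : 0 < v) (hK : 0 < K) :
    ∃ c₄ c₅ : ℝ, 0 < c₄ ∧ c₄ ≤ 1 / (2 * Real.exp 1 * K) ∧ 0 < c₅ ∧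
      ∀ (Ω : Type) (mΩ : MeasurableSpace Ω) (P : Measure Ω),
        IsProbabilityMeasure P →
        ∀ X : Ω → ℝ, Measurable X →
          (∀ ℓ : ℕ, 1 ≤ ℓ → Integrable (fun ω => |X ω| ^ ℓ) P) →
          (∫ ω, X ω ∂P) = 0 →
          v ≤ ∫ ω, (X ω) ^ 2 ∂P →
          (∀ ℓ : ℕ, 1 ≤ ℓ → ∫ ω, |X ω| ^ ℓ ∂P ≤ (K * ℓ) ^ ℓ) →
          ∀ η : ℝ, |η| ≤ c₄ →
            Integrable (fun ω => Real.exp (η * X ω)) P ∧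
            Real.exp (c₅ * η ^ 2) ≤ ∫ ω, Real.exp (η * X ω) ∂P := by
  set A : ℝ := Real.exp 1 * K with hA_def
  have hA : 0 < A := by positivity
  have hsv : 0 < Real.sqrt v := Real.sqrt_pos.mpr hv
  refine ⟨min (1 / (2 * A)) (min (v / (8 * A ^ 3)) (2 / Real.sqrt v)), v / 8,
    ?_, ?_, by positivity, ?_⟩
  · positivity
  · calc min (1 / (2 * A)) _ ≤ 1 / (2 * A) := min_le_left _ _
      _ = 1 / (2 * Real.exp 1 * K) := by rw [hA_def, mul_assoc]
  intro Ω mΩ P hP X hXm hInt hmean hvar hmom η hη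
  have hη1 : |η| ≤ 1 / (2 * A) := le_trans hη (min_le_left _ _)
  have hη2 : |η| ≤ v / (8 * A ^ 3) := le_trans hη ((min_le_right _ _).trans (min_le_left _ _))
  have hη3 : |η| ≤ 2 / Real.sqrt v := le_trans hη ((min_le_right _ _).trans (min_le_right _ _))
  set q : ℝ := |η| * A with hq_def
  have hq0 : 0 ≤ q := by positivity
  have hq : q ≤ 1 / 2 := by
    rw [hq_def]
    calc |η| * A ≤ (1 / (2 * A)) * A := by gcongr
      _ = 1 / 2 := by field_simp
  -- extended integrability of |X|^ℓ
  have hInt' : ∀ ℓ : ℕ, Integrable (fun ω => |X ω| ^ ℓ) P := by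
    intro ℓ
    rcases Nat.eq_zero_or_pos ℓ with h | h
    · simp [h]
    · exact hInt ℓ h
  -- the terms of the series
  have hfun : ∀ ℓ : ℕ, (fun ω => |η * X ω| ^ ℓ / (ℓ.factorial : ℝ))
      = fun ω => (|η| ^ ℓ / ℓ.factorial) * |X ω| ^ ℓ := by
    intro ℓ; funext ω; rw [abs_mul, mul_pow]; ring
  have hIntf : ∀ ℓ : ℕ, Integrable (fun ω => |η * X ω| ^ ℓ / (ℓ.factorial : ℝ)) P := by
    intro ℓ; rw [hfun ℓ]; exact (hInt' ℓ).const_mul _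
  -- integral bound for each term
  have hbound : ∀ ℓ : ℕ, ∫ ω, |η * X ω| ^ ℓ / (ℓ.factorial : ℝ) ∂P ≤ q ^ ℓ := by
    intro ℓ
    rcases Nat.eq_zero_or_pos ℓ with h | h
    · simp [h]
    · rw [hfun ℓ, integral_const_mul]
      have hfℓ : (0:ℝ) < ℓ.factorial := by positivity
      calc |η| ^ ℓ / ℓ.factorial * ∫ ω, |X ω| ^ ℓ ∂P
          ≤ |η| ^ ℓ / ℓ.factorial * (K * ℓ) ^ ℓ := by
            apply mul_le_mul_of_nonneg_left (hmom ℓ h) (by positivity)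
        _ = |η| ^ ℓ * K ^ ℓ * ((ℓ:ℝ) ^ ℓ / ℓ.factorial) := by rw [mul_pow]; ring
        _ ≤ |η| ^ ℓ * K ^ ℓ * Real.exp 1 ^ ℓ := by
            apply mul_le_mul_of_nonneg_left _ (by positivity)
            rw [div_le_iff₀ hfℓ]
            exact aux_pow_fact ℓ
        _ = q ^ ℓ := by rw [hq_def, hA_def]; ring
  -- lintegral of each term
  have hmterm : ∀ ℓ : ℕ, Measurable (fun ω => |η * X ω| ^ ℓ / (ℓ.factorial : ℝ)) := by
    intro ℓ
    exact (((hXm.const_mul η).abs.pow_const ℓ).div_const _)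
  have hterm : ∀ ℓ : ℕ, ∫⁻ ω, ENNReal.ofReal (|η * X ω| ^ ℓ / (ℓ.factorial : ℝ)) ∂P
      = ENNReal.ofReal (∫ ω, |η * X ω| ^ ℓ / (ℓ.factorial : ℝ) ∂P) := by
    intro ℓ
    exact (ofReal_integral_eq_lintegral_ofReal (hIntf ℓ)
      (ae_of_all _ fun ω => by positivity)).symm
  -- the pointwise series identity for exp |η X|
  have hFtsum : ∀ ω, Real.exp |η * X ω| = ∑' ℓ : ℕ, |η * X ω| ^ ℓ / (ℓ.factorial : ℝ) :=
    fun ω => aux_exp_tsum _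
  set r : ENNReal := ENNReal.ofReal q with hr_def
  have hr1 : r < 1 := by
    rw [hr_def]
    calc ENNReal.ofReal q ≤ ENNReal.ofReal (1/2) := ENNReal.ofReal_le_ofReal hq
      _ < 1 := by norm_num [ENNReal.ofReal_lt_one]
  have hrterm : ∀ ℓ : ℕ, ∫⁻ ω, ENNReal.ofReal (|η * X ω| ^ ℓ / (ℓ.factorial : ℝ)) ∂P ≤ r ^ ℓ := by
    intro ℓ
    rw [hterm ℓ, hr_def, ← ENNReal.ofReal_pow hq0]
    exact ENNReal.ofReal_le_ofReal (hbound ℓ)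
  -- integrability of exp |η X|
  have hFlint : ∫⁻ ω, ENNReal.ofReal (Real.exp |η * X ω|) ∂P < ⊤ := by
    have heq : ∫⁻ ω, ENNReal.ofReal (Real.exp |η * X ω|) ∂P
        = ∑' ℓ : ℕ, ∫⁻ ω, ENNReal.ofReal (|η * X ω| ^ ℓ / (ℓ.factorial : ℝ)) ∂P := by
      rw [← lintegral_tsum fun ℓ => ((hmterm ℓ).ennreal_ofReal).aemeasurable]
      congr 1; funext ω
      rw [hFtsum ω, ENNReal.ofReal_tsum_of_nonneg (fun ℓ => by positivity)
        (Real.summable_pow_div_factorial _)]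
    rw [heq]
    calc ∑' ℓ : ℕ, ∫⁻ ω, ENNReal.ofReal (|η * X ω| ^ ℓ / (ℓ.factorial : ℝ)) ∂P
        ≤ ∑' ℓ : ℕ, r ^ ℓ := ENNReal.tsum_le_tsum hrterm
      _ = (1 - r)⁻¹ := ENNReal.tsum_geometric r
      _ < ⊤ := ENNReal.inv_lt_top.mpr (tsub_pos_of_lt hr1)
  have hFint : Integrable (fun ω => Real.exp |η * X ω|) P := by
    constructor
    · exact ((hXm.const_mul η).abs.exp).aestronglyMeasurable
    · rw [hasFiniteIntegral_iff_ofReal (ae_of_all _ fun ω => (Real.exp_pos _).le)]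
      exact hFlint
  have hexpInt : Integrable (fun ω => Real.exp (η * X ω)) P := by
    refine hFint.mono ((hXm.const_mul η).exp).aestronglyMeasurable
      (ae_of_all _ fun ω => ?_)
    rw [Real.norm_eq_abs, Real.norm_eq_abs, abs_of_pos (Real.exp_pos _),
      abs_of_pos (Real.exp_pos _)]
    exact Real.exp_le_exp.mpr (le_abs_self _)
  refine ⟨hexpInt, ?_⟩
  -- the remainder function g
  set g : Ω → ℝ := fun ω => Real.exp |η * X ω| - (1 + |η * X ω| + |η * X ω| ^ 2 / 2)
    with hg_def
  have h1' : Integrable (fun ω => |η * X ω|) P := by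
    have := hIntf 1; simpa using this
  have h2' : Integrable (fun ω => |η * X ω| ^ 2 / 2) P := by
    have := hIntf 2
    norm_num [Nat.factorial] at this
    simpa using this
  have hgInt : Integrable g P :=
    hFint.sub (((integrable_const 1).add h1').add h2')
  have hg0 : ∀ ω, 0 ≤ g ω := fun ω => aux_tail_nonneg _ (abs_nonneg _)
  -- bound on ∫ g
  have hgbound : ∫ ω, g ω ∂P ≤ 2 * q ^ 3 := by
    have hinv : (1 - r)⁻¹ ≤ 2 := by
      have h12 : ENNReal.ofReal (1 / 2) ≤ 1 - r := by
        rw [hr_def, ← ENNReal.ofReal_one, ← ENNReal.ofReal_sub _ hq0]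
        exact ENNReal.ofReal_le_ofReal (by linarith)
      calc (1 - r)⁻¹ ≤ (ENNReal.ofReal (1 / 2))⁻¹ := ENNReal.inv_le_inv' h12
        _ = 2 := by
            rw [ENNReal.ofReal_div_of_pos (by norm_num)]
            norm_num
    have key : ENNReal.ofReal (∫ ω, g ω ∂P) ≤ ENNReal.ofReal (2 * q ^ 3) := by
      rw [ofReal_integral_eq_lintegral_ofReal hgInt (ae_of_all _ hg0)]
      have heq : ∫⁻ ω, ENNReal.ofReal (g ω) ∂P
          = ∑' n : ℕ, ∫⁻ ω, ENNReal.ofReal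
              (|η * X ω| ^ (n + 3) / ((n + 3).factorial : ℝ)) ∂P := by
        rw [← lintegral_tsum fun n => ((hmterm (n + 3)).ennreal_ofReal).aemeasurable]
        congr 1; funext ω
        rw [hg_def]
        simp only
        rw [aux_tail, ENNReal.ofReal_tsum_of_nonneg (fun n => by positivity)
          (aux_summable_tail _)]
      rw [heq]
      calc ∑' n : ℕ, ∫⁻ ω, ENNReal.ofReal
              (|η * X ω| ^ (n + 3) / ((n + 3).factorial : ℝ)) ∂P
          ≤ ∑' n : ℕ, r ^ (n + 3) := ENNReal.tsum_le_tsum fun n => hrterm (n + 3)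
        _ = r ^ 3 * (1 - r)⁻¹ := by
            simp_rw [pow_add, mul_comm (r ^ _) (r ^ 3)]
            rw [ENNReal.tsum_mul_left, ENNReal.tsum_geometric]
        _ ≤ r ^ 3 * 2 := by gcongr
        _ = ENNReal.ofReal (2 * q ^ 3) := by
            rw [hr_def, ← ENNReal.ofReal_pow hq0, mul_comm,
              ← ENNReal.ofReal_ofNat, ← ENNReal.ofReal_mul (by positivity)]
    exact (ENNReal.ofReal_le_ofReal_iff (by positivity)).mp key
  -- integrability of X and X^2
  have hX1 : Integrable X P := by
    rw [← integrable_norm_iff hXm.aestronglyMeasurable]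
    simpa [Real.norm_eq_abs] using hInt 1 le_rfl
  have hX2 : Integrable (fun ω => (X ω) ^ 2) P := by
    simpa [sq_abs] using hInt 2 (by norm_num)
  -- the lower-bound integrand
  have hL1 : Integrable (fun ω => 1 + η * X ω + η ^ 2 / 2 * (X ω) ^ 2) P :=
    ((integrable_const 1).add (hX1.const_mul η)).add (hX2.const_mul _)
  have hpt : ∀ ω, 1 + η * X ω + η ^ 2 / 2 * (X ω) ^ 2 - g ω ≤ Real.exp (η * X ω) := by
    intro ω
    have h := aux_pointwise (η * X ω)
    have : (η * X ω) ^ 2 / 2 = η ^ 2 / 2 * (X ω) ^ 2 := by ring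
    rw [hg_def]
    simp only
    linarith
  have hmono : ∫ ω, (1 + η * X ω + η ^ 2 / 2 * (X ω) ^ 2 - g ω) ∂P
      ≤ ∫ ω, Real.exp (η * X ω) ∂P :=
    integral_mono (hL1.sub hgInt) hexpInt hpt
  have hcomp : ∫ ω, (1 + η * X ω + η ^ 2 / 2 * (X ω) ^ 2 - g ω) ∂P
      = 1 + η ^ 2 / 2 * ∫ ω, (X ω) ^ 2 ∂P - ∫ ω, g ω ∂P := by
    have i0 : Integrable (fun _ : Ω => (1:ℝ)) P := integrable_const 1
    have i1 : Integrable (fun ω => η * X ω) P := hX1.const_mul η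
    have i01 : Integrable (fun ω => 1 + η * X ω) P := i0.add i1
    have i2 : Integrable (fun ω => η ^ 2 / 2 * (X ω) ^ 2) P := hX2.const_mul _
    rw [integral_sub hL1 hgInt, integral_add i01 i2, integral_add i0 i1,
      integral_const, integral_const_mul, integral_const_mul, hmean]
    simp [measure_univ]
  -- putting the estimates together
  have hq3 : 2 * q ^ 3 ≤ v / 4 * η ^ 2 := by
    have habs : |η| ^ 2 = η ^ 2 := sq_abs η
    have hA3 : (0:ℝ) < A ^ 3 := by positivity
    calc 2 * q ^ 3 = 2 * A ^ 3 * (η ^ 2 * |η|) := by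
          rw [hq_def]; rw [← habs]; ring
      _ ≤ 2 * A ^ 3 * (η ^ 2 * (v / (8 * A ^ 3))) := by
          apply mul_le_mul_of_nonneg_left _ (by positivity)
          apply mul_le_mul_of_nonneg_left hη2 (sq_nonneg η)
      _ = v / 4 * η ^ 2 := by field_simp; ring
  have hlow : 1 + v / 4 * η ^ 2 ≤ ∫ ω, Real.exp (η * X ω) ∂P := by
    have hvar' : v / 2 * η ^ 2 ≤ η ^ 2 / 2 * ∫ ω, (X ω) ^ 2 ∂P := by
      have := mul_le_mul_of_nonneg_left hvar (by positivity : (0:ℝ) ≤ η ^ 2 / 2)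
      linarith
    rw [hcomp] at hmono
    linarith
  -- final logarithmic step
  set x : ℝ := v / 4 * η ^ 2 with hx_def
  have hx0 : 0 ≤ x := by positivity
  have hx1 : x ≤ 1 := by
    have hsq : η ^ 2 ≤ (2 / Real.sqrt v) ^ 2 := by
      rw [← sq_abs]
      exact pow_le_pow_left₀ (abs_nonneg η) hη3 2
    have h4v : (2 / Real.sqrt v) ^ 2 = 4 / v := by
      rw [div_pow, Real.sq_sqrt hv.le]; norm_num
    rw [hx_def]
    rw [h4v] at hsq
    calc v / 4 * η ^ 2 ≤ v / 4 * (4 / v) := by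
          apply mul_le_mul_of_nonneg_left hsq (by positivity)
      _ = 1 := by field_simp
  have hpos : (0:ℝ) < 1 + x := by linarith
  have hlog : x / 2 ≤ Real.log (1 + x) := by
    have h := Real.log_le_sub_one_of_pos (show (0:ℝ) < (1 + x)⁻¹ by positivity)
    rw [Real.log_inv] at h
    have h2 : 1 - (1 + x)⁻¹ = x / (1 + x) := by field_simp; ring
    have h3 : x / 2 ≤ x / (1 + x) := by gcongr; linarith
    linarith
  have hfin : Real.exp (v / 8 * η ^ 2) ≤ 1 + x := by
    have hxe : v / 8 * η ^ 2 = x / 2 := by rw [hx_def]; ring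
    rw [hxe, ← Real.exp_log hpos]
    exact Real.exp_le_exp.mpr hlog
  linarith
end

section
/- For every κ > 0 and every integer k with 1 ≤ k ≤ N and k ≥ (κ/(2c))², one has P( min_{1 ≤ m ≤ k} S_m ≥ −κ·√k ) ≥ 1 − e^{−κ²/(4c²)}. (This is the Doob-inequality core of Lemma 3.9, with N(κ₀) = (κ₀/(2c₂))² and C₆(κ₀) = 1 − exp{−κ₀²/(4c₂²)}.) -/
open MeasureTheory ProbabilityTheory in
/-- Core of Lemma 3.9: if `X₁,…,X_N` are independent, centered, with
`E[e^{ηX_i}] ≤ e^{c²η²}` for `|η| ≤ 1/c`, then for `κ > 0` and `1 ≤ k ≤ N` with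
`k ≥ (κ/(2c))²`, `P(min_{1≤m≤k} S_m ≥ −κ√k) ≥ 1 − e^{−κ²/(4c²)}`. -/
theorem stmt8 (Ω : Type) (mΩ : MeasurableSpace Ω) (P : Measure Ω)
    [IsProbabilityMeasure P]
    (c : ℝ) (hc : 0 < c) (N : ℕ)
    (X : Fin N → Ω → ℝ) (hmeas : ∀ i, Measurable (X i))
    (hindep : iIndepFun X P)
    (hint : ∀ i, Integrable (X i) P)
    (hmean : ∀ i, (∫ ω, X i ω ∂P) = 0)
    (hmgf : ∀ i, ∀ η : ℝ, |η| ≤ 1 / c →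
      Integrable (fun ω => Real.exp (η * X i ω)) P ∧
      ∫ ω, Real.exp (η * X i ω) ∂P ≤ Real.exp (c ^ 2 * η ^ 2)) :
    ∀ κ : ℝ, 0 < κ → ∀ k : ℕ, 1 ≤ k → k ≤ N → (κ / (2 * c)) ^ 2 ≤ (k : ℝ) →
      ENNReal.ofReal (1 - Real.exp (-κ ^ 2 / (4 * c ^ 2))) ≤
        P {ω | ∀ m : ℕ, 1 ≤ m → m ≤ k →
          -κ * Real.sqrt k ≤
            ∑ i ∈ Finset.univ.filter (fun i : Fin N => (i : ℕ) < m), X i ω} := by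
  classical
  intro κ hκ k hk1 hkN hkκ
  set S : ℕ → Ω → ℝ :=
    fun m ω => ∑ i ∈ Finset.univ.filter (fun i : Fin N => (i : ℕ) < m), X i ω with hS_def
  have hSmeas : ∀ m, Measurable (S m) :=
    fun m => Finset.measurable_sum _ (fun i _ => hmeas i)
  set sk : ℝ := Real.sqrt k with hsk_def
  have hkpos : (0:ℝ) < k := by exact_mod_cast hk1
  have hsk : 0 < sk := Real.sqrt_pos.2 hkpos
  have hsk2 : sk ^ 2 = k := Real.sq_sqrt hkpos.le
  set b : ℝ := κ * sk with hb_def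
  have hb : 0 < b := mul_pos hκ hsk
  set η : ℝ := κ / (2 * c ^ 2 * sk) with hη_def
  have hη_pos : 0 < η := by positivity
  have hκsk : κ / (2 * c) ≤ sk := by
    have h1 : κ / (2 * c) = Real.sqrt ((κ / (2 * c)) ^ 2) := by
      rw [Real.sqrt_sq (by positivity)]
    rw [h1]; exact Real.sqrt_le_sqrt hkκ
  have hη_le : η ≤ 1 / c := by
    rw [hη_def, div_le_div_iff₀ (by positivity) hc]
    rw [div_le_iff₀ (by positivity)] at hκsk
    nlinarith
  have hη_abs : |(-η)| ≤ 1 / c := by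
    rw [abs_neg, abs_of_pos hη_pos]; exact hη_le
  -- integrability and bounds on the one-step mgf's at -η
  have hint_i : ∀ i : Fin N, Integrable (fun ω => Real.exp (-η * X i ω)) P :=
    fun i => (hmgf i (-η) hη_abs).1
  have hbound_i : ∀ i : Fin N, mgf (X i) P (-η) ≤ Real.exp (c ^ 2 * η ^ 2) := by
    intro i
    have := (hmgf i (-η) hη_abs).2
    simpa [mgf, neg_sq] using this
  have hone_i : ∀ i : Fin N, (1:ℝ) ≤ mgf (X i) P (-η) := by
    intro i
    have hii : Integrable (fun ω => 1 + (-η) * X i ω) P :=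
      (integrable_const 1).add ((hint i).const_mul (-η))
    have hmono : ∫ ω, (1 + (-η) * X i ω) ∂P ≤ ∫ ω, Real.exp (-η * X i ω) ∂P := by
      refine integral_mono hii (hint_i i) (fun ω => ?_)
      have := Real.add_one_le_exp ((-η) * X i ω)
      linarith
    have hval : ∫ ω, (1 + (-η) * X i ω) ∂P = 1 := by
      rw [integral_add (integrable_const 1) ((hint i).const_mul (-η)),
        integral_const, integral_const_mul, hmean i]
      simp
    rw [hval] at hmono
    simpa [mgf] using hmono
  -- finsets of indices
  set F : ℕ → Finset (Fin N) :=
    fun m => Finset.univ.filter (fun i : Fin N => (i : ℕ) < m) with hF_def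
  have hFcard : (F k).card = k := by
    have hcr : (F k).card = (Finset.range k).card := by
      refine Finset.card_bij (fun (i : Fin N) _ => (i : ℕ)) ?_ ?_ ?_
      · intro a ha
        simp only [hF_def, Finset.mem_filter] at ha
        exact Finset.mem_range.2 ha.2
      · intro a _ b _ hab
        exact Fin.ext hab
      · intro j hj
        exact ⟨⟨j, lt_of_lt_of_le (Finset.mem_range.1 hj) hkN⟩,
          by simp [hF_def, Finset.mem_range.1 hj], rfl⟩
    rw [hcr, Finset.card_range]
  have hSF : ∀ m ω, S m ω = ∑ i ∈ F m, X i ω := fun m ω => rfl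
  -- the "bad" sets: first time the partial sum drops below -b
  set A : ℕ → Set Ω :=
    fun m => {ω | S m ω < -b} ∩ ⋂ j ∈ Finset.range m, {ω | -b ≤ S j ω} with hA_def
  have hAmem : ∀ m ω, ω ∈ A m ↔ (S m ω < -b ∧ ∀ j < m, -b ≤ S j ω) := by
    intro m ω
    simp [hA_def, Set.mem_iInter]
  have hAmeas : ∀ m, MeasurableSet (A m) := by
    intro m
    refine (measurableSet_lt (hSmeas m) measurable_const).inter ?_
    exact MeasurableSet.biInter (Finset.range m).countable_toSet
      (fun j _ => measurableSet_le measurable_const (hSmeas j))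
  have hAdisj : Set.Pairwise ↑(Finset.Icc 1 k) (Function.onFun Disjoint A) := by
    intro m hm n hn hmn
    rcases hmn.lt_or_gt with h | h
    · refine Set.disjoint_left.2 (fun ω hωm hωn => ?_)
      have h1 := ((hAmem m ω).1 hωm).1
      have h2 := ((hAmem n ω).1 hωn).2 m h
      linarith
    · refine Set.disjoint_left.2 (fun ω hωm hωn => ?_)
      have h1 := ((hAmem n ω).1 hωn).1
      have h2 := ((hAmem m ω).1 hωm).2 n h
      linarith
  set B : Set Ω := ⋃ m ∈ Finset.Icc 1 k, A m with hB_def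
  have hBmeas : MeasurableSet B :=
    Finset.measurableSet_biUnion _ (fun m _ => hAmeas m)
  have hS0 : ∀ ω, S 0 ω = 0 := by
    intro ω; simp [hS_def]
  -- the target set is the complement of B
  have hGB : {ω | ∀ m : ℕ, 1 ≤ m → m ≤ k → -κ * sk ≤ S m ω} = Bᶜ := by
    ext ω
    simp only [Set.mem_setOf_eq, Set.mem_compl_iff, hB_def, Set.mem_iUnion,
      Finset.mem_Icc, not_exists]
    constructor
    · rintro h m ⟨hm1, hm2⟩ hωm
      have h1 := ((hAmem m ω).1 hωm).1
      have h2 := h m hm1 hm2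
      rw [hb_def] at h1
      rw [neg_mul] at h2
      linarith
    · intro h m hm1 hm2
      by_contra hcon
      push_neg at hcon
      have hex : ∃ j, j ≤ k ∧ S j ω < -b := ⟨m, hm2, by
        rw [neg_mul] at hcon
        rw [hb_def]
        exact hcon⟩
      obtain ⟨hm₀k, hm₀lt⟩ := Nat.find_spec hex
      have hm₀1 : 1 ≤ Nat.find hex := by
        rcases Nat.eq_zero_or_pos (Nat.find hex) with h0 | h0
        · exfalso
          rw [h0, hS0] at hm₀lt
          linarith
        · exact h0
      refine h (Nat.find hex) ⟨hm₀1, hm₀k⟩ ?_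
      refine (hAmem (Nat.find hex) ω).2 ⟨hm₀lt, fun j hj => ?_⟩
      by_contra hc2
      push_neg at hc2
      exact Nat.find_min hex hj ⟨le_trans hj.le hm₀k, hc2⟩
  -- integrand
  set f : Ω → ℝ := fun ω => Real.exp (-η * S k ω) with hf_def
  have hf_nonneg : ∀ ω, 0 ≤ f ω := fun ω => (Real.exp_pos _).le
  have hf_int : Integrable f P := by
    have := hindep.integrable_exp_mul_sum hmeas (s := F k)
      (t := -η) (fun i _ => hint_i i)
    simpa [hf_def, hS_def, hF_def, Finset.sum_apply] using this
  -- total mgf bound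
  have hf_total : ∫ ω, f ω ∂P ≤ Real.exp ((k:ℝ) * (c ^ 2 * η ^ 2)) := by
    have hmgfsum := hindep.mgf_sum hmeas (t := -η) (F k)
    have heq : ∫ ω, f ω ∂P = mgf (∑ i ∈ F k, X i) P (-η) := by
      simp [hf_def, mgf, hS_def, hF_def, Finset.sum_apply]
    rw [heq, hmgfsum]
    calc ∏ i ∈ F k, mgf (X i) P (-η)
        ≤ ∏ i ∈ F k, Real.exp (c ^ 2 * η ^ 2) :=
          Finset.prod_le_prod (fun i _ => mgf_nonneg) (fun i _ => hbound_i i)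
      _ = Real.exp (c ^ 2 * η ^ 2) ^ (F k).card := Finset.prod_const _
      _ = Real.exp ((k:ℝ) * (c ^ 2 * η ^ 2)) := by
          rw [hFcard, ← Real.exp_nat_mul]
  -- the key per-m estimate
  have hkey : ∀ m ∈ Finset.Icc 1 k,
      Real.exp (η * b) * (P (A m)).toReal ≤ ∫ ω in A m, f ω ∂P := by
    intro m hm
    obtain ⟨hm1, hm2⟩ := Finset.mem_Icc.1 hm
    set D : Finset (Fin N) := F k \ F m with hD_def
    have hFsub : F m ⊆ F k := by
      intro i hi
      simp only [hF_def, Finset.mem_filter] at hi ⊢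
      exact ⟨hi.1, lt_of_lt_of_le hi.2 hm2⟩
    have hdisj : Disjoint (F m) D := Finset.disjoint_sdiff
    have hsplit : ∀ ω, S k ω = S m ω + ∑ i ∈ D, X i ω := by
      intro ω
      rw [hSF k ω, hSF m ω, ← Finset.sum_sdiff hFsub (f := fun i => X i ω)]
      ring
    -- the two block functions
    set g1 : Ω → ℝ := Set.indicator (A m) (fun ω => Real.exp (-η * S m ω)) with hg1_def
    set g2 : Ω → ℝ := fun ω => Real.exp (-η * ∑ i ∈ D, X i ω) with hg2_def
    -- independence of g1 and g2
    have hblock := hindep.indepFun_finset (F m) D hdisj hmeas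
    set T : ℕ → ({ x // x ∈ F m } → ℝ) → ℝ :=
      fun j x => ∑ i : { x // x ∈ F m }, if ((i : Fin N) : ℕ) < j then x i else 0 with hT_def
    have hTmeas : ∀ j, Measurable (T j) := by
      intro j
      refine Finset.measurable_sum _ (fun i _ => ?_)
      by_cases h : ((i : Fin N) : ℕ) < j
      · simpa [h] using measurable_pi_apply i
      · simpa [h] using (measurable_const : Measurable fun _ : { x // x ∈ F m } → ℝ => (0:ℝ))
    have hT_eq : ∀ j, j ≤ m → ∀ ω, T j (fun i : { x // x ∈ F m } => X i ω) = S j ω := by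
      intro j hj ω
      rw [hT_def]
      dsimp only
      rw [Finset.sum_coe_sort (F m) (fun i => if (i : ℕ) < j then X i ω else 0),
        ← Finset.sum_filter]
      rw [hSF j ω]
      congr 1
      rw [hF_def]
      dsimp only
      rw [Finset.filter_filter]
      apply Finset.filter_congr
      intro i _
      constructor
      · exact fun h => h.2
      · exact fun h => ⟨lt_of_lt_of_le h hj, h⟩
    set M : Set ({ x // x ∈ F m } → ℝ) :=
      {x | T m x < -b} ∩ ⋂ j ∈ Finset.range m, {x | -b ≤ T j x} with hM_def
    have hMmeas : MeasurableSet M := by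
      refine (measurableSet_lt (hTmeas m) measurable_const).inter ?_
      exact MeasurableSet.biInter (Finset.range m).countable_toSet
        (fun j _ => measurableSet_le measurable_const (hTmeas j))
    have hMiff : ∀ ω, ω ∈ A m ↔ (fun i : { x // x ∈ F m } => X i ω) ∈ M := by
      intro ω
      rw [hAmem m ω]
      simp only [hM_def, Set.mem_inter_iff, Set.mem_setOf_eq, Set.mem_iInter,
        Finset.mem_range]
      constructor
      · rintro ⟨h1, h2⟩
        exact ⟨by rw [hT_eq m le_rfl ω]; exact h1,
          fun j hj => by rw [hT_eq j hj.le ω]; exact h2 j hj⟩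
      · rintro ⟨h1, h2⟩
        rw [hT_eq m le_rfl ω] at h1
        refine ⟨h1, fun j hj => ?_⟩
        have := h2 j hj
        rwa [hT_eq j hj.le ω] at this
    set φ : ({ x // x ∈ F m } → ℝ) → ℝ :=
      Set.indicator M (fun x => Real.exp (-η * T m x)) with hφ_def
    have hφ : Measurable φ :=
      Measurable.indicator (Real.measurable_exp.comp ((hTmeas m).const_mul (-η))) hMmeas
    set ψ : ({ x // x ∈ D } → ℝ) → ℝ :=
      fun y => Real.exp (-η * ∑ i : { x // x ∈ D }, y i) with hψ_def
    have hψ : Measurable ψ := by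
      refine Real.measurable_exp.comp (Measurable.const_mul ?_ (-η))
      exact Finset.measurable_sum _ (fun i _ => measurable_pi_apply i)
    have hg1_eq : g1 = φ ∘ (fun ω (i : { x // x ∈ F m }) => X i ω) := by
      funext ω
      by_cases hω : ω ∈ A m
      · have hmem := (hMiff ω).1 hω
        simp only [Function.comp_apply, hg1_def, hφ_def,
          Set.indicator_of_mem hω, Set.indicator_of_mem hmem]
        rw [hT_eq m le_rfl ω]
      · have hmem : (fun i : { x // x ∈ F m } => X i ω) ∉ M :=
          fun hcon => hω ((hMiff ω).2 hcon)
        simp only [Function.comp_apply, hg1_def, hφ_def,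
          Set.indicator_of_notMem hω, Set.indicator_of_notMem hmem]
    have hg2_eq : g2 = ψ ∘ (fun ω (i : { x // x ∈ D }) => X i ω) := by
      funext ω
      simp only [Function.comp_apply, hg2_def, hψ_def]
      rw [Finset.sum_coe_sort D (fun i => X i ω)]
    have hindep12 : IndepFun g1 g2 P := by
      rw [hg1_eq, hg2_eq]
      exact hblock.comp hφ hψ
    -- integrability
    have hexpSm_int : Integrable (fun ω => Real.exp (-η * S m ω)) P := by
      have := hindep.integrable_exp_mul_sum hmeas (s := F m)
        (t := -η) (fun i _ => hint_i i)
      simpa [hS_def, hF_def, Finset.sum_apply] using this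
    have hg1_int : Integrable g1 P := hexpSm_int.indicator (hAmeas m)
    have hg2_int : Integrable g2 P := by
      have := hindep.integrable_exp_mul_sum hmeas (s := D)
        (t := -η) (fun i _ => hint_i i)
      simpa [hg2_def, Finset.sum_apply] using this
    have hg1_nonneg : ∀ ω, 0 ≤ g1 ω := fun ω =>
      Set.indicator_nonneg (fun ω _ => (Real.exp_pos _).le) ω
    -- ∫ g2 ≥ 1
    have hg2_ge : (1:ℝ) ≤ ∫ ω, g2 ω ∂P := by
      have hmgfsum := hindep.mgf_sum hmeas (t := -η) D
      have heq : ∫ ω, g2 ω ∂P = mgf (∑ i ∈ D, X i) P (-η) := by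
        simp [hg2_def, mgf, Finset.sum_apply]
      rw [heq, hmgfsum]
      have h1 : (∏ _i ∈ D, (1:ℝ)) ≤ ∏ i ∈ D, mgf (X i) P (-η) :=
        Finset.prod_le_prod (fun _ _ => zero_le_one) (fun i _ => hone_i i)
      simpa using h1
    -- ∫ g1 ≥ exp(ηb) P(A m)
    have hg1_ge : Real.exp (η * b) * (P (A m)).toReal ≤ ∫ ω, g1 ω ∂P := by
      have hle : ∀ ω, Set.indicator (A m) (fun _ => Real.exp (η * b)) ω ≤ g1 ω := by
        intro ω
        by_cases hω : ω ∈ A m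
        · simp only [hg1_def, Set.indicator_of_mem hω]
          apply Real.exp_le_exp.2
          have h1 := ((hAmem m ω).1 hω).1
          nlinarith
        · simp [hg1_def, Set.indicator_of_notMem hω]
      have hind_int : Integrable (Set.indicator (A m) (fun _ => Real.exp (η * b))) P :=
        (integrable_const _).indicator (hAmeas m)
      have hmono := integral_mono hind_int hg1_int hle
      rwa [integral_indicator (hAmeas m), setIntegral_const, smul_eq_mul, mul_comm] at hmono
    -- product decomposition
    have hprod : ∀ ω, Set.indicator (A m) f ω = g1 ω * g2 ω := by
      intro ω
      by_cases hω : ω ∈ A m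
      · simp only [Set.indicator_of_mem hω, hg1_def, hg2_def, hf_def]
        rw [← Real.exp_add]
        congr 1
        rw [hsplit ω]
        ring
      · simp [hg1_def, Set.indicator_of_notMem hω]
    have hmul : ∫ ω, g1 ω * g2 ω ∂P = (∫ ω, g1 ω ∂P) * ∫ ω, g2 ω ∂P :=
      hindep12.integral_fun_mul_eq_mul_integral hg1_int.aestronglyMeasurable hg2_int.aestronglyMeasurable
    calc Real.exp (η * b) * (P (A m)).toReal
        ≤ ∫ ω, g1 ω ∂P := hg1_ge
      _ ≤ (∫ ω, g1 ω ∂P) * ∫ ω, g2 ω ∂P :=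
          le_mul_of_one_le_right (integral_nonneg hg1_nonneg) hg2_ge
      _ = ∫ ω, g1 ω * g2 ω ∂P := hmul.symm
      _ = ∫ ω, Set.indicator (A m) f ω ∂P := by
          refine integral_congr_ae (ae_of_all _ (fun ω => ?_))
          rw [hprod ω]
      _ = ∫ ω in A m, f ω ∂P := integral_indicator (hAmeas m)
  -- summation over m
  have hsum : Real.exp (η * b) * (P B).toReal ≤ Real.exp ((k:ℝ) * (c ^ 2 * η ^ 2)) := by
    have hPB : P B = ∑ m ∈ Finset.Icc 1 k, P (A m) :=
      measure_biUnion_finset hAdisj (fun m _ => hAmeas m)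
    have htoReal : (P B).toReal = ∑ m ∈ Finset.Icc 1 k, (P (A m)).toReal := by
      rw [hPB, ENNReal.toReal_sum (fun m _ => measure_ne_top P _)]
    calc Real.exp (η * b) * (P B).toReal
        = ∑ m ∈ Finset.Icc 1 k, Real.exp (η * b) * (P (A m)).toReal := by
          rw [htoReal, Finset.mul_sum]
      _ ≤ ∑ m ∈ Finset.Icc 1 k, ∫ ω in A m, f ω ∂P := Finset.sum_le_sum hkey
      _ = ∫ ω in B, f ω ∂P :=
          (integral_biUnion_finset _ (fun m _ => hAmeas m) hAdisj
            (fun m _ => hf_int.integrableOn)).symm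
      _ ≤ ∫ ω, f ω ∂P := setIntegral_le_integral hf_int (ae_of_all _ hf_nonneg)
      _ ≤ Real.exp ((k:ℝ) * (c ^ 2 * η ^ 2)) := hf_total
  -- arithmetic: the resulting bound
  have hPBle : (P B).toReal ≤ Real.exp (-κ ^ 2 / (4 * c ^ 2)) := by
    have hexp : Real.exp ((k:ℝ) * (c ^ 2 * η ^ 2)) / Real.exp (η * b) =
        Real.exp (-κ ^ 2 / (4 * c ^ 2)) := by
      rw [← Real.exp_sub]
      congr 1
      rw [hη_def, hb_def, ← hsk2]
      field_simp
      ring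
    rw [← hexp, le_div_iff₀ (Real.exp_pos _), mul_comm]
    exact hsum
  -- conclusion
  rw [hGB, measure_compl hBmeas (measure_ne_top P B), measure_univ]
  have h1 : P B ≤ ENNReal.ofReal (Real.exp (-κ ^ 2 / (4 * c ^ 2))) := by
    rw [← ENNReal.ofReal_toReal (measure_ne_top P B)]
    exact ENNReal.ofReal_le_ofReal hPBle
  calc ENNReal.ofReal (1 - Real.exp (-κ ^ 2 / (4 * c ^ 2)))
      = ENNReal.ofReal 1 - ENNReal.ofReal (Real.exp (-κ ^ 2 / (4 * c ^ 2))) :=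
        ENNReal.ofReal_sub _ (Real.exp_pos _).le
    _ = 1 - ENNReal.ofReal (Real.exp (-κ ^ 2 / (4 * c ^ 2))) := by
        rw [ENNReal.ofReal_one]
    _ ≤ 1 - P B := tsub_le_tsub_left h1 1
end

section
/- If for every K > 0 one has limsup_{n→∞} P( S_n > K·√n ) > 0, then limsup_{n→∞} S_n/√n = +∞ P-almost surely. (This is the ergodicity argument in the proof of Lemma 2.6 showing that limsup_{x→∞} R_x/√x = +∞ a.s. when σ_λ² > 0.) -/
section AuxStmt11
open Filter MeasureTheory

variable {Ω : Type} [MeasurableSpace Ω]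

/-- partial sums -/
noncomputable def auxS11 (T : Ω → Ω) (U : Ω → ℝ) (n : ℕ) (ω : Ω) : ℝ :=
  ∑ k ∈ Finset.range n, U (T^[k] ω)

lemma auxS11_meas {T : Ω → Ω} {U : Ω → ℝ} (hT : Measurable T) (hU : Measurable U) (n : ℕ) :
    Measurable (auxS11 T U n) :=
  Finset.measurable_sum _ fun k _ => hU.comp (hT.iterate k)

lemma auxS11_bound {T : Ω → Ω} {U : Ω → ℝ} {C : ℝ} (hbd : ∀ ω, |U ω| ≤ C) (n : ℕ) (ω : Ω) :
    |auxS11 T U n ω| ≤ C * n := by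
  calc |auxS11 T U n ω| ≤ ∑ k ∈ Finset.range n, |U (T^[k] ω)| :=
        Finset.abs_sum_le_sum_abs _ _
    _ ≤ ∑ _k ∈ Finset.range n, C := Finset.sum_le_sum fun k _ => hbd _
    _ = C * n := by simp [mul_comm]

lemma auxS11_shift (T : Ω → Ω) (U : Ω → ℝ) (n : ℕ) (ω : Ω) :
    auxS11 T U n (T ω) = auxS11 T U (n + 1) ω - U ω := by
  have h1 : auxS11 T U (n + 1) ω
      = (∑ k ∈ Finset.range n, U (T^[k + 1] ω)) + U (T^[0] ω) :=
    Finset.sum_range_succ' _ n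
  have h2 : auxS11 T U n (T ω) = ∑ k ∈ Finset.range n, U (T^[k + 1] ω) := by
    refine Finset.sum_congr rfl fun k _ => ?_
    rw [Function.iterate_succ_apply]
  rw [h1, h2, Function.iterate_zero_apply]
  ring

lemma aux11_freq_succ (p : ℕ → Prop) :
    (∃ᶠ n in Filter.atTop, p (n + 1)) ↔ ∃ᶠ n in Filter.atTop, p n := by
  have h := @Filter.frequently_map ℕ ℕ Filter.atTop (fun n => n + 1) p
  rw [Filter.map_add_atTop_eq_nat] at h
  exact h.symm

lemma aux11_shift (a b : ℕ → ℝ)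
    (hd : Filter.Tendsto (fun n => b n - a (n + 1)) Filter.atTop (nhds 0)) (K : ℝ) :
    (∀ ε : ℝ, 0 < ε → ∃ᶠ n in Filter.atTop, K - ε < a n) ↔
      (∀ ε : ℝ, 0 < ε → ∃ᶠ n in Filter.atTop, K - ε < b n) := by
  have hev : ∀ ε : ℝ, 0 < ε → ∀ᶠ n in Filter.atTop, |b n - a (n + 1)| < ε := by
    intro ε hε
    have := Metric.tendsto_nhds.1 hd ε hε
    simpa [Real.dist_eq] using this
  constructor
  · intro hfreq ε hε
    have h1 : ∃ᶠ n in Filter.atTop, K - ε / 2 < a (n + 1) :=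
      (aux11_freq_succ fun m => K - ε / 2 < a m).2 (hfreq (ε / 2) (by positivity))
    refine (h1.and_eventually (hev (ε / 2) (by positivity))).mono ?_
    rintro n ⟨hn1, hn2⟩
    have := abs_lt.1 hn2
    linarith [this.1]
  · intro hfreq ε hε
    have h1 : ∃ᶠ n in Filter.atTop, K - ε < a (n + 1) := by
      refine ((hfreq (ε / 2) (by positivity)).and_eventually
        (hev (ε / 2) (by positivity))).mono ?_
      rintro n ⟨hn1, hn2⟩
      have := abs_lt.1 hn2
      linarith [this.2]
    exact (aux11_freq_succ fun m => K - ε < a m).1 h1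

lemma aux11_revFatou (P : Measure Ω) [IsFiniteMeasure P] (s : ℕ → Set Ω)
    (hs : ∀ n, MeasurableSet (s n)) :
    Filter.limsup (fun n => P (s n)) Filter.atTop ≤ P (Filter.limsup s Filter.atTop) := by
  have hanti : Antitone (fun N : ℕ => ⋃ i, ⋃ (_ : N ≤ i), s i) := by
    intro M N hMN x hx
    simp only [Set.mem_iUnion] at hx ⊢
    obtain ⟨i, hi, hxi⟩ := hx
    exact ⟨i, hMN.trans hi, hxi⟩
  have hls : Filter.limsup s Filter.atTop = ⋂ N : ℕ, ⋃ i, ⋃ (_ : N ≤ i), s i := by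
    rw [Filter.limsup_eq_iInf_iSup_of_nat]
    simp only [Set.iInf_eq_iInter, Set.iSup_eq_iUnion]
  have hWm : ∀ N : ℕ, MeasurableSet (⋃ i, ⋃ (_ : N ≤ i), s i) := fun N =>
    MeasurableSet.iUnion fun i => MeasurableSet.iUnion fun _ => hs i
  rw [hls, Directed.measure_iInter (fun N => (hWm N).nullMeasurableSet)
    (hanti.directed_ge) ⟨0, measure_ne_top P _⟩]
  refine le_iInf fun N => ?_
  have h1 : Filter.limsup (fun n => P (s n)) Filter.atTop ≤ ⨆ i, ⨆ (_ : N ≤ i), P (s i) := by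
    rw [Filter.limsup_eq_iInf_iSup_of_nat]
    exact iInf_le _ N
  exact h1.trans (iSup₂_le fun i hi => measure_mono
    (Set.subset_iUnion₂ (s := fun i (_ : N ≤ i) => s i) i hi))

lemma aux11_ereal_top (a : ℕ → ℝ) (h : ∀ K : ℝ, ∃ᶠ n in Filter.atTop, K < a n) :
    Filter.limsup (fun n => ((a n : ℝ) : EReal)) Filter.atTop = ⊤ := by
  rw [EReal.eq_top_iff_forall_lt]
  intro y
  have h1 : ((y + 1 : ℝ) : EReal) ≤ Filter.limsup (fun n => ((a n : ℝ) : EReal)) Filter.atTop :=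
    Filter.le_limsup_of_frequently_le'
      ((h (y + 1)).mono fun n hn => le_of_lt (by exact_mod_cast hn))
  refine lt_of_lt_of_le ?_ h1
  exact_mod_cast lt_add_one y

lemma aux11_sqrt_atTop : Filter.Tendsto (fun n : ℕ => Real.sqrt n) Filter.atTop Filter.atTop := by
  refine Filter.tendsto_atTop_atTop.2 fun b => ⟨⌈b ^ 2⌉₊, fun n hn => ?_⟩
  calc b ≤ |b| := le_abs_self b
    _ = Real.sqrt (b ^ 2) := (Real.sqrt_sq_eq_abs b).symm
    _ ≤ Real.sqrt n := Real.sqrt_le_sqrt ((Nat.le_ceil _).trans (by exact_mod_cast hn))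

lemma aux11_delta {C : ℝ} (hC : 0 ≤ C) (u : ℝ) (hu : |u| ≤ C) (S : ℕ → ℝ)
    (hS : ∀ n : ℕ, |S n| ≤ C * n) :
    Filter.Tendsto
      (fun n : ℕ => (S (n + 1) - u) / Real.sqrt n - S (n + 1) / Real.sqrt ((n + 1 : ℕ)))
      Filter.atTop (nhds 0) := by
  apply squeeze_zero_norm' (a := fun n : ℕ => 2 * C / Real.sqrt n)
  · filter_upwards [Filter.eventually_ge_atTop 1] with n hn
    have hn1 : (1 : ℝ) ≤ (n : ℝ) := by exact_mod_cast hn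
    set s := Real.sqrt n with hsdef
    set t := Real.sqrt ((n : ℕ) + 1 : ℕ) with htdef
    have hs1 : 1 ≤ s := by
      rw [hsdef, show (1 : ℝ) = Real.sqrt 1 from Real.sqrt_one.symm]
      exact Real.sqrt_le_sqrt hn1
    have hs0 : 0 < s := lt_of_lt_of_le one_pos hs1
    have hts : s ≤ t := by
      rw [hsdef, htdef]
      push_cast
      exact Real.sqrt_le_sqrt (by linarith)
    have ht0 : 0 < t := lt_of_lt_of_le hs0 hts
    have hs2 : s ^ 2 = (n : ℝ) := by
      rw [hsdef]; exact Real.sq_sqrt (by positivity)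
    have ht2 : t ^ 2 = (n : ℝ) + 1 := by
      rw [htdef]; push_cast; exact Real.sq_sqrt (by positivity)
    have hSb : |S (n + 1)| ≤ C * t ^ 2 := by
      have := hS (n + 1)
      rw [ht2]
      push_cast at this ⊢
      linarith
    have he : (S (n + 1) - u) / s - S (n + 1) / t
        = (S (n + 1) * (t - s) - u * t) / (s * t) := by
      field_simp
      ring
    have hkey : t * (t - s) ≤ 1 := by nlinarith [mul_nonneg (le_of_lt hs0) (sub_nonneg.2 hts)]
    have hnum : |S (n + 1) * (t - s) - u * t| ≤ 2 * C * t := by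
      calc |S (n + 1) * (t - s) - u * t| ≤ |S (n + 1) * (t - s)| + |u * t| := abs_sub _ _
        _ = |S (n + 1)| * (t - s) + |u| * t := by
            rw [abs_mul, abs_mul, abs_of_nonneg (sub_nonneg.2 hts), abs_of_pos ht0]
        _ ≤ (C * t ^ 2) * (t - s) + C * t := by
            refine add_le_add (mul_le_mul_of_nonneg_right hSb (sub_nonneg.2 hts))
              (mul_le_mul_of_nonneg_right hu (le_of_lt ht0))
        _ ≤ 2 * C * t := by nlinarith [mul_le_mul_of_nonneg_left hkey (mul_nonneg hC (le_of_lt ht0))]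
    rw [Real.norm_eq_abs, he, abs_div, abs_of_pos (mul_pos hs0 ht0),
      div_le_div_iff₀ (mul_pos hs0 ht0) hs0]
    nlinarith [mul_le_mul_of_nonneg_right hnum (le_of_lt hs0)]
  · exact Filter.Tendsto.div_atTop tendsto_const_nhds aux11_sqrt_atTop

end AuxStmt11

open MeasureTheory in
/-- Ergodicity argument in the proof of Lemma 2.6: for `S_n = Σ_{k<n} U ∘ T^k` with `T`
ergodic and `U` bounded measurable, if for every `K > 0`
`limsup_n P(S_n > K √n) > 0`, then almost surely `limsup_n S_n/√n = +∞`. -/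
theorem stmt11 (Ω : Type) (mΩ : MeasurableSpace Ω) (P : Measure Ω)
    [IsProbabilityMeasure P]
    (T : Ω → Ω) (hT : Ergodic T P)
    (U : Ω → ℝ) (hU : Measurable U) (C : ℝ) (hbd : ∀ ω, |U ω| ≤ C)
    (h : ∀ K : ℝ, 0 < K →
      0 < Filter.limsup
        (fun nn : ℕ => P {ω | K * Real.sqrt nn < ∑ k ∈ Finset.range nn, U (T^[k] ω)})
        Filter.atTop) :
    P {ω | Filter.limsup
        (fun nn : ℕ => (((∑ k ∈ Finset.range nn, U (T^[k] ω)) / Real.sqrt nn : ℝ) : EReal))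
        Filter.atTop = ⊤} = 1 := by
  have hTm : Measurable T := hT.toMeasurePreserving.measurable
  have hne : Nonempty Ω := by
    by_contra hc
    rw [not_nonempty_iff] at hc
    have h1 : P Set.univ = 1 := measure_univ
    rw [Set.univ_eq_empty_iff.mpr hc, measure_empty] at h1
    exact zero_ne_one h1
  have hC : 0 ≤ C := (abs_nonneg _).trans (hbd (Classical.arbitrary Ω))
  -- the sets F K
  set F : ℝ → Set Ω := fun K => ⋂ j : ℕ,
    Filter.limsup (fun n => {ω | K - 1 / (j + 1) < auxS11 T U n ω / Real.sqrt n})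
      Filter.atTop with hFdef
  have hAm : ∀ (c : ℝ) (n : ℕ), MeasurableSet {ω | c < auxS11 T U n ω / Real.sqrt n} :=
    fun c n => measurableSet_lt measurable_const ((auxS11_meas hTm hU n).div_const _)
  have hFm : ∀ K, MeasurableSet (F K) := fun K =>
    MeasurableSet.iInter fun j => MeasurableSet.measurableSet_limsup fun n => hAm _ n
  have hFmem : ∀ K (ω : Ω), ω ∈ F K ↔
      ∀ ε : ℝ, 0 < ε → ∃ᶠ n in Filter.atTop, K - ε < auxS11 T U n ω / Real.sqrt n := by
    intro K ω
    simp only [hFdef, Set.mem_iInter, Filter.mem_limsup_iff_frequently_mem, Set.mem_setOf_eq]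
    constructor
    · intro hj ε hε
      obtain ⟨j, hjε⟩ := exists_nat_one_div_lt hε
      exact (hj j).mono fun n hn => by push_cast at hn ⊢; linarith
    · intro hε j
      exact hε (1 / (j + 1)) (by positivity)
  -- deltas
  have hdelta : ∀ ω : Ω, Filter.Tendsto
      (fun n : ℕ => auxS11 T U n (T ω) / Real.sqrt n
        - auxS11 T U (n + 1) ω / Real.sqrt ((n + 1 : ℕ))) Filter.atTop (nhds 0) := by
    intro ω
    have hbase := aux11_delta hC (U ω) (hbd ω) (fun n => auxS11 T U n ω)
      (fun n => auxS11_bound hbd n ω)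
    refine hbase.congr fun n => ?_
    rw [auxS11_shift]
  -- invariance
  have hFinv : ∀ K, T ⁻¹' (F K) = F K := by
    intro K
    ext ω
    rw [Set.mem_preimage, hFmem, hFmem]
    exact (aux11_shift (fun n => auxS11 T U n ω / Real.sqrt n)
      (fun n => auxS11 T U n (T ω) / Real.sqrt n) (hdelta ω) K).symm
  -- positivity
  have hFpos : ∀ K : ℝ, 0 < K → 0 < P (F K) := by
    intro K hK
    have hsets : ∀ n : ℕ,
        {ω | K * Real.sqrt n < auxS11 T U n ω} = {ω | K < auxS11 T U n ω / Real.sqrt n} := by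
      intro n
      rcases Nat.eq_zero_or_pos n with h0 | hp
      · subst h0
        ext ω
        have hz : auxS11 T U 0 ω = 0 := by simp [auxS11]
        simp only [Set.mem_setOf_eq, hz, Nat.cast_zero, Real.sqrt_zero, mul_zero, div_zero]
        constructor <;> intro hh <;> linarith
      · ext ω
        have hs : 0 < Real.sqrt (n : ℝ) := Real.sqrt_pos.2 (by exact_mod_cast hp)
        simp only [Set.mem_setOf_eq]
        rw [lt_div_iff₀ hs]
    have h0 : 0 < Filter.limsup
        (fun n : ℕ => P {ω | K < auxS11 T U n ω / Real.sqrt n}) Filter.atTop := by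
      have heq : (fun n : ℕ => P {ω | K < auxS11 T U n ω / Real.sqrt n})
          = fun n : ℕ => P {ω | K * Real.sqrt n < auxS11 T U n ω} :=
        funext fun n => by rw [hsets n]
      rw [heq]
      exact h K hK
    have h1 : 0 < P (Filter.limsup
        (fun n => {ω | K < auxS11 T U n ω / Real.sqrt n}) Filter.atTop) :=
      lt_of_lt_of_le h0 (aux11_revFatou P _ (fun n => hAm K n))
    refine lt_of_lt_of_le h1 (measure_mono ?_)
    intro ω hω
    rw [Filter.mem_limsup_iff_frequently_mem] at hω
    refine (hFmem K ω).2 fun ε hε => hω.mono fun n hn => ?_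
    simp only [Set.mem_setOf_eq] at hn
    linarith
  -- ergodicity: F K has full measure
  have hFone : ∀ K : ℝ, 0 < K → P (F K) = 1 := by
    intro K hK
    rcases hT.toPreErgodic.ae_empty_or_univ (hFm K) (hFinv K) with h1 | h1
    · exfalso
      have h2 : P (F K) = 0 := by simpa using measure_congr h1
      exact (hFpos K hK).ne' h2
    · have h2 : P (F K) = P Set.univ := measure_congr h1
      rw [h2, measure_univ]
  -- intersection has full measure
  have hAone : P (⋂ m : ℕ, F (m + 1)) = 1 := by
    have hc : P (⋂ m : ℕ, F (m + 1))ᶜ = 0 := by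
      rw [Set.compl_iInter]
      exact measure_iUnion_null fun m =>
        (prob_compl_eq_zero_iff (hFm _)).2 (hFone (m + 1) (by positivity))
    exact (prob_compl_eq_zero_iff (MeasurableSet.iInter fun m => hFm _)).1 hc
  -- inclusion into the target set
  have hsub : (⋂ m : ℕ, F (m + 1)) ⊆ {ω | Filter.limsup
      (fun nn : ℕ => (((∑ k ∈ Finset.range nn, U (T^[k] ω)) / Real.sqrt nn : ℝ) : EReal))
      Filter.atTop = ⊤} := by
    intro ω hω
    simp only [Set.mem_iInter] at hω
    have htop : ∀ K : ℝ, ∃ᶠ n in Filter.atTop, K < auxS11 T U n ω / Real.sqrt n := by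
      intro K
      obtain ⟨m, hm⟩ := exists_nat_ge K
      have h1 := (hFmem ((m : ℝ) + 1) ω).1 (hω m) 1 one_pos
      exact h1.mono fun n hn => lt_of_le_of_lt (by linarith) hn
    exact aux11_ereal_top (fun n => auxS11 T U n ω / Real.sqrt n) htop
  have h2 : 1 ≤ P {ω | Filter.limsup
      (fun nn : ℕ => (((∑ k ∈ Finset.range nn, U (T^[k] ω)) / Real.sqrt nn : ℝ) : EReal))
      Filter.atTop = ⊤} := hAone ▸ measure_mono hsub
  exact le_antisymm prob_le_one h2
end

section
/- Assume that for every y ∈ ℝ, P({ω : F(ω, x) ≤ y·√x}) → Φ(y/s) as x → +∞. Then for every y ∈ ℝ, P({ω : V_t(ω) ≤ v·t + y·√t}) → Φ(λ·y/(s·√v)) as t → +∞; that is, (V_t − v·t)/√t converges in distribution to a centered Gaussian with variance s²·v/λ². (This is the change-of-variables argument proving the central limit theorem for the front V_t in Lemma 3.7, with F = −ln φ(·, −λ*), λ = λ*, v = v*, s = σ'_{−λ*}.) -/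
open MeasureTheory ProbabilityTheory Filter Set

lemma gauss_atom (r : ℝ) : gaussianReal 0 1 {r} = 0 :=
  gaussianReal_absolutelyContinuous 0 one_ne_zero (Real.volume_singleton)

lemma gauss_map_neg : (gaussianReal 0 1).map (fun x : ℝ => -1 * x) = gaussianReal 0 1 := by
  rw [gaussianReal_map_const_mul (μ := 0) (v := 1) (-1)]
  norm_num

lemma gauss_symm (a : ℝ) :
    (gaussianReal 0 1 (Set.Iic (-a))).toReal = 1 - (gaussianReal 0 1 (Set.Iic a)).toReal := by
  have hmap : gaussianReal 0 1 (Set.Iic (-a)) = gaussianReal 0 1 (Set.Ici a) := by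
    conv_lhs => rw [← gauss_map_neg]
    rw [Measure.map_apply (by fun_prop) measurableSet_Iic]
    congr 1
    ext x
    simp [neg_le_neg_iff]
  have hIci : gaussianReal 0 1 (Set.Ici a) = gaussianReal 0 1 (Set.Ioi a) := by
    refine le_antisymm ?_ (measure_mono Set.Ioi_subset_Ici_self)
    calc gaussianReal 0 1 (Set.Ici a) = gaussianReal 0 1 (Set.Ioi a ∪ {a}) := by
          rw [Set.Ioi_union_left]
      _ ≤ gaussianReal 0 1 (Set.Ioi a) + gaussianReal 0 1 {a} := measure_union_le _ _
      _ = gaussianReal 0 1 (Set.Ioi a) := by rw [gauss_atom, add_zero]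
  have hsplit : gaussianReal 0 1 (Set.Iic a) + gaussianReal 0 1 (Set.Ioi a) = 1 := by
    rw [← Set.compl_Iic, measure_add_measure_compl measurableSet_Iic, measure_univ]
  have h1 : (gaussianReal 0 1 (Set.Iic a)).toReal + (gaussianReal 0 1 (Set.Ioi a)).toReal = 1 := by
    rw [← ENNReal.toReal_add (measure_ne_top _ _) (measure_ne_top _ _), hsplit, ENNReal.toReal_one]
  rw [hmap, hIci]
  linarith

lemma gauss_cdf_continuous : Continuous fun r : ℝ => (gaussianReal 0 1 (Set.Iic r)).toReal := by
  have h : ∀ r : ℝ, (gaussianReal 0 1 (Set.Iic r)).toReal = cdf (gaussianReal 0 1) r :=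
    fun r => (cdf_eq_real _ r).symm
  simp only [h]
  refine continuous_iff_continuousAt.mpr fun x => ?_
  rw [(monotone_cdf _).continuousAt_iff_leftLim_eq_rightLim, StieltjesFunction.rightLim_eq]
  have hatom : (cdf (gaussianReal 0 1)).measure {x} = 0 := by
    rw [measure_cdf]; exact gauss_atom x
  rw [StieltjesFunction.measure_singleton, ENNReal.ofReal_eq_zero] at hatom
  have h2 : Function.leftLim (cdf (gaussianReal 0 1)) x ≤ cdf (gaussianReal 0 1) x :=
    (monotone_cdf _).leftLim_le le_rfl
  linarith

lemma sqrt_tendsto_atTop : Tendsto Real.sqrt atTop atTop := by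
  refine tendsto_atTop_atTop.mpr fun b => ⟨(max b 0) ^ 2, fun a ha => ?_⟩
  calc b ≤ max b 0 := le_max_left _ _
    _ = Real.sqrt ((max b 0) ^ 2) := (Real.sqrt_sq (le_max_right _ _)).symm
    _ ≤ Real.sqrt a := Real.sqrt_le_sqrt ha



open MeasureTheory ProbabilityTheory in
/-- The change-of-variables CLT argument of Lemma 3.7: if `x ↦ λx + F(ω,x)` is a
continuous strictly increasing bijection of `ℝ`, `V_t` solves `λV_t + F(ω,V_t) = λvt`,
and `P(F(·,x) ≤ y√x) → Φ(y/s)` as `x → ∞` for each `y`, then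
`P(V_t ≤ vt + y√t) → Φ(λy/(s√v))` as `t → ∞` for each `y`. -/
theorem stmt13 (Ω : Type) (mΩ : MeasurableSpace Ω) (P : Measure Ω)
    [IsProbabilityMeasure P]
    (lam v s : ℝ) (hlam : 0 < lam) (hv : 0 < v) (hs : 0 < s)
    (F : Ω → ℝ → ℝ) (hFmeas : ∀ x : ℝ, Measurable fun ω => F ω x)
    (hmono : ∀ ω, StrictMono fun x => lam * x + F ω x)
    (hcont : ∀ ω, Continuous fun x => lam * x + F ω x)
    (hsurj : ∀ ω, Function.Surjective fun x => lam * x + F ω x)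
    (V : ℝ → Ω → ℝ) (hV : ∀ t ω, lam * V t ω + F ω (V t ω) = lam * v * t)
    (hcdf : ∀ y : ℝ, Filter.Tendsto
      (fun x : ℝ => (P {ω | F ω x ≤ y * Real.sqrt x}).toReal)
      Filter.atTop (nhds ((gaussianReal 0 1 (Set.Iic (y / s))).toReal))) :
    ∀ y : ℝ, Filter.Tendsto
      (fun t : ℝ => (P {ω | V t ω ≤ v * t + y * Real.sqrt t}).toReal)
      Filter.atTop
      (nhds ((gaussianReal 0 1 (Set.Iic (lam * y / (s * Real.sqrt v)))).toReal)) := by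
  intro y
  have hsv : (0:ℝ) < Real.sqrt v := Real.sqrt_pos.mpr hv
  set xf : ℝ → ℝ := fun t => v * t + y * Real.sqrt t with hxf
  set cf : ℝ → ℝ := fun t => -(lam * y * Real.sqrt t) with hcf
  set z : ℝ := -(lam * y) / Real.sqrt v with hz
  -- Step A: set identity
  have hset : ∀ t : ℝ, {ω | V t ω ≤ v * t + y * Real.sqrt t}
      = {ω | F ω (xf t) < cf t}ᶜ := by
    intro t
    ext ω
    have hexp : lam * (v * t + y * Real.sqrt t)
        = lam * v * t + lam * y * Real.sqrt t := by ring
    simp only [Set.mem_setOf_eq, Set.mem_compl_iff, not_lt, hxf, hcf]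
    constructor
    · intro h
      have h2 := (hmono ω).le_iff_le.mpr h
      rw [hV t ω] at h2
      linarith
    · intro h
      have h2 : lam * V t ω + F ω (V t ω)
          ≤ lam * (v * t + y * Real.sqrt t) + F ω (v * t + y * Real.sqrt t) := by
        rw [hV t ω]; linarith
      exact (hmono ω).le_iff_le.mp h2
  -- Step B: complement probability
  have hPeq : ∀ t : ℝ, (P {ω | V t ω ≤ v * t + y * Real.sqrt t}).toReal
      = 1 - (P {ω | F ω (xf t) < cf t}).toReal := by
    intro t
    rw [hset t, prob_compl_eq_one_sub (measurableSet_lt (hFmeas _) measurable_const),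
      ENNReal.toReal_sub_of_le prob_le_one ENNReal.one_ne_top, ENNReal.toReal_one]
  -- xf tends to infinity
  have hx : Filter.Tendsto xf Filter.atTop Filter.atTop := by
    have h1 : Filter.Tendsto (fun t => Real.sqrt t * (v * Real.sqrt t + y))
        Filter.atTop Filter.atTop :=
      sqrt_tendsto_atTop.atTop_mul_atTop₀
        (tendsto_atTop_add_const_right _ y (sqrt_tendsto_atTop.const_mul_atTop hv))
    refine h1.congr' ?_
    filter_upwards [eventually_ge_atTop (0:ℝ)] with t ht
    simp only [hxf]
    have h2 : Real.sqrt t * Real.sqrt t = t := Real.mul_self_sqrt ht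
    linear_combination v * h2
  -- cf t / sqrt (xf t) tends to z
  have hr : Filter.Tendsto (fun t => cf t / Real.sqrt (xf t)) Filter.atTop (nhds z) := by
    have h0 : Filter.Tendsto (fun t : ℝ => y / Real.sqrt t) Filter.atTop (nhds 0) := by
      have := (sqrt_tendsto_atTop.inv_tendsto_atTop).const_mul y
      simpa [div_eq_mul_inv] using this
    have hu : Filter.Tendsto (fun t : ℝ => v + y / Real.sqrt t) Filter.atTop (nhds v) := by
      simpa using tendsto_const_nhds.add h0
    have hsq : Filter.Tendsto (fun t : ℝ => Real.sqrt (v + y / Real.sqrt t))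
        Filter.atTop (nhds (Real.sqrt v)) := (Real.continuous_sqrt.tendsto v).comp hu
    have hdiv : Filter.Tendsto (fun t : ℝ => -(lam * y) / Real.sqrt (v + y / Real.sqrt t))
        Filter.atTop (nhds z) := by
      rw [hz]
      exact tendsto_const_nhds.div hsq hsv.ne'
    refine hdiv.congr' ?_
    have hpos : ∀ᶠ t : ℝ in Filter.atTop, 0 < v + y / Real.sqrt t :=
      hu.eventually (eventually_gt_nhds hv)
    filter_upwards [eventually_gt_atTop (0:ℝ), hpos] with t ht hwt
    have hts : 0 < Real.sqrt t := Real.sqrt_pos.mpr ht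
    have hxe : xf t = t * (v + y / Real.sqrt t) := by
      simp only [hxf]
      have h1 : t / Real.sqrt t = Real.sqrt t := by
        rw [eq_comm, eq_div_iff hts.ne', Real.mul_self_sqrt ht.le]
      linear_combination (-y) * h1
    have hw : 0 < Real.sqrt (v + y / Real.sqrt t) := Real.sqrt_pos.mpr hwt
    rw [hxe, Real.sqrt_mul ht.le, hcf]
    rw [div_eq_div_iff hw.ne' (by positivity)]
    ring
  -- the central limit
  have hg : Filter.Tendsto (fun t => (P {ω | F ω (xf t) < cf t}).toReal) Filter.atTop
      (nhds ((gaussianReal 0 1 (Set.Iic (z / s))).toReal)) := by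
    rw [Metric.tendsto_nhds]
    intro δ hδ
    have hΦc : ContinuousAt (fun w : ℝ => (gaussianReal 0 1 (Set.Iic (w / s))).toReal) z :=
      (gauss_cdf_continuous.comp (continuous_id.div_const s)).continuousAt
    obtain ⟨ε, hε, hball⟩ := Metric.continuousAt_iff.mp hΦc (δ / 2) (half_pos hδ)
    set wp : ℝ := z + ε / 2 with hwp
    set wm : ℝ := z - ε / 2 with hwm
    have hdp : dist wp z < ε := by
      rw [Real.dist_eq, hwp]
      rw [show z + ε / 2 - z = ε / 2 by ring, abs_of_pos (half_pos hε)]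
      linarith
    have hdm : dist wm z < ε := by
      rw [Real.dist_eq, hwm]
      rw [show z - ε / 2 - z = -(ε / 2) by ring, abs_neg, abs_of_pos (half_pos hε)]
      linarith
    have hΦp := hball hdp
    have hΦm := hball hdm
    rw [Real.dist_eq, abs_lt] at hΦp hΦm
    have hA := Metric.tendsto_nhds.mp ((hcdf wp).comp hx) (δ / 2) (half_pos hδ)
    have hB := Metric.tendsto_nhds.mp ((hcdf wm).comp hx) (δ / 2) (half_pos hδ)
    simp only [Function.comp_apply] at hA hB
    have hrE := Metric.tendsto_nhds.mp hr (ε / 2) (half_pos hε)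
    filter_upwards [hA, hB, hrE, hx.eventually_gt_atTop 0] with t hAt hBt hrt hxt
    have hsx : 0 < Real.sqrt (xf t) := Real.sqrt_pos.mpr hxt
    rw [Real.dist_eq, abs_lt] at hrt hAt hBt
    have hclo : wm * Real.sqrt (xf t) < cf t := by
      have h1 : wm < cf t / Real.sqrt (xf t) := by rw [hwm]; linarith [hrt.1]
      calc wm * Real.sqrt (xf t) < cf t / Real.sqrt (xf t) * Real.sqrt (xf t) :=
            mul_lt_mul_of_pos_right h1 hsx
        _ = cf t := div_mul_cancel₀ _ hsx.ne'
    have hchi : cf t < wp * Real.sqrt (xf t) := by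
      have h1 : cf t / Real.sqrt (xf t) < wp := by rw [hwp]; linarith [hrt.2]
      calc cf t = cf t / Real.sqrt (xf t) * Real.sqrt (xf t) :=
            (div_mul_cancel₀ _ hsx.ne').symm
        _ < wp * Real.sqrt (xf t) := mul_lt_mul_of_pos_right h1 hsx
    have hup : (P {ω | F ω (xf t) < cf t}).toReal
        ≤ (P {ω | F ω (xf t) ≤ wp * Real.sqrt (xf t)}).toReal := by
      refine ENNReal.toReal_mono (measure_ne_top _ _) (measure_mono fun ω hω => ?_)
      exact (lt_of_lt_of_le hω hchi.le).le
    have hlow : (P {ω | F ω (xf t) ≤ wm * Real.sqrt (xf t)}).toReal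
        ≤ (P {ω | F ω (xf t) < cf t}).toReal := by
      refine ENNReal.toReal_mono (measure_ne_top _ _) (measure_mono fun ω hω => ?_)
      exact lt_of_le_of_lt hω hclo
    rw [Real.dist_eq, abs_lt]
    constructor <;> [linarith [hAt.2, hΦp.2, hup]; linarith [hBt.1, hΦm.1, hlow]]
  -- conclude
  have hval : (gaussianReal 0 1 (Set.Iic (lam * y / (s * Real.sqrt v)))).toReal
      = 1 - (gaussianReal 0 1 (Set.Iic (z / s))).toReal := by
    have hzs : z / s = -(lam * y / (s * Real.sqrt v)) := by
      rw [hz, div_div, neg_div, mul_comm (Real.sqrt v) s]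
    rw [hzs, gauss_symm]
    ring
  rw [hval]
  exact (tendsto_const_nhds.sub hg).congr fun t => (hPeq t).symm
end
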